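/- arXiv:1801.04175 — 5 statements merged into one kernel-verified Lean document; each statement's English description precedes it below -/
import Mathlib

section
/- Let Π ∈ ℝ^{n×n} be a symmetric matrix satisfying Π² = Π + F for a symmetric matrix F, let C ⊆ {1,…,n} be an index set with |C| = r ≥ 1, and suppose Π(C,C) = R̃ᵀR̃ + E, where E is a symmetric r×r matrix and R̃ is an r×r upper triangular matrix whose diagonal entries all satisfy r̃_{ii} ≥ δ for some δ > 0. Set ε_H = ‖E‖₂ + ‖F‖₂ and suppose 1 − δ² + ε_H < 1/r. Then Π(C,C) is invertible and ‖Π(C,C)⁻¹‖₂ ≤ (1/r) · 1/(δ² − 1 + 1/r − ε_H). -/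
open Matrix
open scoped RealInnerProductSpace

/-- The spectral norm (largest singular value) of a real matrix: the operator
norm induced by the Euclidean vector norms. -/
noncomputable def specNorm {m n : ℕ} (M : Matrix (Fin m) (Fin n) ℝ) : ℝ :=
  ‖LinearMap.toContinuousLinearMap (Matrix.toEuclideanLin M)‖

namespace SpecAux

noncomputable def ev {m : ℕ} (x : Fin m → ℝ) : EuclideanSpace ℝ (Fin m) :=
  (WithLp.equiv 2 (Fin m → ℝ)).symm x

lemma inner_ev {m : ℕ} (x y : Fin m → ℝ) : ⟪ev x, ev y⟫ = x ⬝ᵥ y := by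
  simp [ev, EuclideanSpace.inner_eq_star_dotProduct]; exact dotProduct_comm _ _

lemma norm_ev_sq {m : ℕ} (x : Fin m → ℝ) : ‖ev x‖ ^ 2 = x ⬝ᵥ x := by
  rw [← inner_ev x x, real_inner_self_eq_norm_sq]

lemma norm_mulVec_le {m : ℕ} (M : Matrix (Fin m) (Fin m) ℝ) (x : Fin m → ℝ) :
    ‖ev (M *ᵥ x)‖ ≤ specNorm M * ‖ev x‖ := by
  have h1 : ev (M *ᵥ x) =
      (LinearMap.toContinuousLinearMap (Matrix.toEuclideanLin M)) (ev x) := by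
    simp [ev, Matrix.toEuclideanLin_apply]
  rw [h1]
  exact (LinearMap.toContinuousLinearMap (Matrix.toEuclideanLin M)).le_opNorm _

lemma specNorm_nonneg {m : ℕ} (M : Matrix (Fin m) (Fin m) ℝ) : 0 ≤ specNorm M :=
  norm_nonneg _

lemma abs_quad_le {m : ℕ} (M : Matrix (Fin m) (Fin m) ℝ) (x : Fin m → ℝ) :
    |x ⬝ᵥ (M *ᵥ x)| ≤ specNorm M * (x ⬝ᵥ x) := by
  rw [← inner_ev, ← norm_ev_sq]
  calc |⟪ev x, ev (M *ᵥ x)⟫| ≤ ‖ev x‖ * ‖ev (M *ᵥ x)‖ := abs_real_inner_le_norm _ _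
    _ ≤ ‖ev x‖ * (specNorm M * ‖ev x‖) := by
        exact mul_le_mul_of_nonneg_left (norm_mulVec_le M x) (norm_nonneg _)
    _ = specNorm M * ‖ev x‖ ^ 2 := by ring

/-- quadratic upper bound for an approximate projection -/
lemma proj_quad_le {n : ℕ} (Pj F : Matrix (Fin n) (Fin n) ℝ) (hPj : Pj.IsHermitian)
    (hPF : Pj * Pj = Pj + F) (y : Fin n → ℝ) :
    y ⬝ᵥ (Pj *ᵥ y) ≤ (1 + specNorm F) * (y ⬝ᵥ y) := by
  set t := y ⬝ᵥ (Pj *ᵥ y) with ht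
  set N := y ⬝ᵥ y with hN
  have hN0 : 0 ≤ N := by
    rw [hN, ← norm_ev_sq]; positivity
  have hf := abs_quad_le F y
  have hF0 := specNorm_nonneg F
  have hsymm : Pjᵀ = Pj := by
    have := hPj; rwa [Matrix.IsHermitian, conjTranspose_eq_transpose_of_trivial] at this
  have hs : (Pj *ᵥ y) ⬝ᵥ (Pj *ᵥ y) = t + y ⬝ᵥ (F *ᵥ y) := by
    have : (Pj *ᵥ y) ⬝ᵥ (Pj *ᵥ y) = y ⬝ᵥ ((Pj * Pj) *ᵥ y) := by
      rw [← mulVec_mulVec, dotProduct_mulVec y Pj, ← mulVec_transpose, hsymm]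
    rw [this, hPF, add_mulVec, dotProduct_add]
  have hCS : t ≤ ‖ev y‖ * ‖ev (Pj *ᵥ y)‖ := by
    rw [ht, ← inner_ev]
    exact real_inner_le_norm _ _
  rcases le_or_gt t 0 with h | h
  · nlinarith
  · have ht2 : t ^ 2 ≤ N * (t + specNorm F * N) := by
      have h2 : t ^ 2 ≤ (‖ev y‖ * ‖ev (Pj *ᵥ y)‖) ^ 2 := by
        apply sq_le_sq' _ hCS; nlinarith [norm_nonneg (ev y), norm_nonneg (ev (Pj *ᵥ y))]
      have h3 : (‖ev y‖ * ‖ev (Pj *ᵥ y)‖) ^ 2 = N * ((Pj *ᵥ y) ⬝ᵥ (Pj *ᵥ y)) := by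
        rw [mul_pow, norm_ev_sq, norm_ev_sq, hN]
      rw [h3, hs] at h2
      have : y ⬝ᵥ (F *ᵥ y) ≤ specNorm F * N := le_trans (le_abs_self _) (by rwa [hN])
      nlinarith
    by_contra hcon
    push_neg at hcon
    have h1 : 0 < t - (1 + specNorm F) * N := by linarith
    nlinarith [mul_pos h h1, mul_nonneg (mul_nonneg hF0 hN0) h1.le, sq_nonneg (specNorm F * N)]

lemma key_dot {n r : ℕ} (c : Fin r → Fin n) (x : Fin r → ℝ) (z : Fin n → ℝ) :
    (fun j => ∑ i, if j = c i then x i else 0) ⬝ᵥ z = ∑ i, x i * z (c i) := by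
  unfold dotProduct
  simp only [Finset.sum_mul, ite_mul, zero_mul]
  rw [Finset.sum_comm]
  simp

lemma lift_quad {n r : ℕ} (c : Fin r → Fin n) (hc : Function.Injective c)
    (M : Matrix (Fin n) (Fin n) ℝ) (x : Fin r → ℝ) :
    ∃ y : Fin n → ℝ, y ⬝ᵥ y = x ⬝ᵥ x ∧ y ⬝ᵥ (M *ᵥ y) = x ⬝ᵥ ((M.submatrix c c) *ᵥ x) := by
  refine ⟨fun j => ∑ i, if j = c i then x i else 0, ?_, ?_⟩
  · rw [key_dot c x]
    unfold dotProduct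
    congr 1; funext i
    congr 1
    simp [hc.eq_iff]
  · rw [key_dot c x]
    unfold dotProduct
    congr 1; funext i
    congr 1
    rw [show (M *ᵥ fun j => ∑ i, if j = c i then x i else 0) (c i)
        = (fun j => ∑ i, if j = c i then x i else 0) ⬝ᵥ (fun k => M (c i) k) by
      rw [dotProduct_comm]; rfl]
    rw [key_dot c x]
    simp [mulVec, dotProduct, submatrix, mul_comm]

variable {r : ℕ} {A : Matrix (Fin r) (Fin r) ℝ} (hA : A.IsHermitian)

lemma trace_eq_sum_eig : A.trace = ∑ i, hA.eigenvalues i := by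
  classical
  rw [hA.trace_eq_sum_eigenvalues]
  simp

lemma eig_rayleigh (i : Fin r) :
    hA.eigenvalues i =
      (hA.eigenvectorBasis i : Fin r → ℝ) ⬝ᵥ (A *ᵥ (hA.eigenvectorBasis i : Fin r → ℝ)) := by
  have := hA.eigenvalues_eq i
  simpa using this

lemma eigvec_dot_self (i : Fin r) :
    (hA.eigenvectorBasis i : Fin r → ℝ) ⬝ᵥ (hA.eigenvectorBasis i : Fin r → ℝ) = 1 := by
  have h := hA.eigenvectorBasis.orthonormal.1 i
  have h2 : ⟪hA.eigenvectorBasis i, hA.eigenvectorBasis i⟫ = 1 := by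
    rw [real_inner_self_eq_norm_sq, h]; norm_num
  rw [← h2, EuclideanSpace.inner_eq_star_dotProduct]
  rfl

lemma quad_lower (m : ℝ) (hm : ∀ i, m ≤ hA.eigenvalues i) (x : Fin r → ℝ) :
    m * (x ⬝ᵥ x) ≤ x ⬝ᵥ (A *ᵥ x) := by
  classical
  set b := hA.eigenvectorBasis with hb
  set T := Matrix.toEuclideanLin A with hT
  have hTb : ∀ i, T (b i) = hA.eigenvalues i • b i := by
    intro i
    have h := hA.mulVec_eigenvectorBasis i
    apply (WithLp.equiv 2 (Fin r → ℝ)).injective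
    simp only [hT, WithLp.equiv_apply, Matrix.ofLp_toEuclideanLin_apply, WithLp.ofLp_smul, hb]
    convert h using 1
  have hsym : (Matrix.toEuclideanLin A).IsSymmetric := Matrix.isHermitian_iff_isSymmetric.mp hA
  have hTev : T (ev x) = ev (A *ᵥ x) := by
    simp [ev, hT, Matrix.toEuclideanLin_apply]
  have hinner : ∀ (u v : Fin r → ℝ), ⟪ev u, ev v⟫ = u ⬝ᵥ v := inner_ev
  have hx : x ⬝ᵥ (A *ᵥ x) = ∑ i, hA.eigenvalues i * ⟪ev x, b i⟫ ^ 2 := by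
    rw [← hinner, ← hTev, ← (b.sum_inner_mul_inner (ev x) (T (ev x)) : _)]
    congr 1; funext i
    rw [show ⟪b i, T (ev x)⟫ = ⟪T (b i), ev x⟫ from (hsym (b i) (ev x)).symm,
      hTb i, real_inner_smul_left, real_inner_comm (b i) (ev x)]
    ring
  have hpar : x ⬝ᵥ x = ∑ i, ⟪ev x, b i⟫ ^ 2 := by
    rw [← hinner, ← (b.sum_inner_mul_inner (ev x) (ev x) : _)]
    congr 1; funext i
    rw [real_inner_comm (b i) (ev x)]; ring
  rw [hx, hpar, Finset.mul_sum]
  apply Finset.sum_le_sum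
  intro i _
  exact mul_le_mul_of_nonneg_right (hm i) (sq_nonneg _)

end SpecAux

theorem stmt0 {n r : ℕ} (hr : 1 ≤ r)
    (Pj F : Matrix (Fin n) (Fin n) ℝ) (hPj : Pj.IsHermitian) (hF : F.IsHermitian)
    (hPF : Pj * Pj = Pj + F)
    (c : Fin r → Fin n) (hc : Function.Injective c)
    (E Rt : Matrix (Fin r) (Fin r) ℝ) (hE : E.IsHermitian)
    (hRt : Rt.BlockTriangular id)
    (δ : ℝ) (hδ : 0 < δ) (hdiag : ∀ i, δ ≤ Rt i i)
    (hfact : Pj.submatrix c c = Rtᵀ * Rt + E)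
    (εH : ℝ) (hεH : εH = specNorm E + specNorm F)
    (hcond : 1 - δ ^ 2 + εH < 1 / (r : ℝ)) :
    IsUnit (Pj.submatrix c c) ∧
      specNorm (Pj.submatrix c c)⁻¹ ≤
        (1 / (r : ℝ)) * (1 / (δ ^ 2 - 1 + 1 / (r : ℝ) - εH)) := by
  classical
  open SpecAux in
  set A := Pj.submatrix c c with hA
  have hAh : A.IsHermitian := hPj.submatrix c
  have hr0 : (0 : ℝ) < r := by exact_mod_cast hr
  set b0 : ℝ := δ ^ 2 - 1 + 1 / (r : ℝ) - εH with hb0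
  have hb0pos : 0 < b0 := by rw [hb0]; linarith
  have hE0 := specNorm_nonneg E
  have hF0 := specNorm_nonneg F
  -- quadratic upper bound on A
  have hup : ∀ x : Fin r → ℝ, x ⬝ᵥ (A *ᵥ x) ≤ (1 + specNorm F) * (x ⬝ᵥ x) := by
    intro x
    obtain ⟨y, hy1, hy2⟩ := lift_quad c hc Pj x
    rw [← hy2, ← hy1]
    exact proj_quad_le Pj F hPj hPF y
  -- eigenvalue upper bound
  have heigup : ∀ i, hAh.eigenvalues i ≤ 1 + specNorm F := by
    intro i
    have := hup (hAh.eigenvectorBasis i : Fin r → ℝ)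
    rw [eigvec_dot_self hAh i, mul_one] at this
    rw [eig_rayleigh hAh i]
    exact this
  -- trace lower bound
  have htr : (r : ℝ) * (δ ^ 2 - specNorm E) ≤ A.trace := by
    have hdiagA : ∀ i, δ ^ 2 - specNorm E ≤ A i i := by
      intro i
      have h1 : A i i = (∑ k, Rt k i * Rt k i) + E i i := by
        rw [hfact]; simp [Matrix.mul_apply, Matrix.add_apply, Matrix.transpose_apply]
      have h2 : δ ^ 2 ≤ ∑ k, Rt k i * Rt k i := by
        have : δ ^ 2 ≤ Rt i i * Rt i i := by nlinarith [hdiag i]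
        refine le_trans this (Finset.single_le_sum (f := fun k => Rt k i * Rt k i)
          (fun k _ => mul_self_nonneg _) (Finset.mem_univ i))
      have h3 : -specNorm E ≤ E i i := by
        have h4 : E i i = (Pi.single i 1) ⬝ᵥ (E *ᵥ (Pi.single i (1:ℝ))) := by
          rw [mulVec_single, single_dotProduct]; simp
        have h5 : (Pi.single i (1:ℝ)) ⬝ᵥ (Pi.single i (1:ℝ)) = 1 := by
          rw [single_dotProduct]; simp
        have := abs_quad_le E (Pi.single i (1:ℝ))
        rw [← h4, h5, mul_one] at this
        have := abs_le.mp this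
        linarith [this.1]
      linarith
    have : ∑ i : Fin r, (δ ^ 2 - specNorm E) ≤ ∑ i, A i i :=
      Finset.sum_le_sum (fun i _ => hdiagA i)
    simp [Matrix.trace, Matrix.diag, mul_comm] at this ⊢; linarith
  -- eigenvalue lower bound
  have heiglo : ∀ i, (r : ℝ) * b0 ≤ hAh.eigenvalues i := by
    intro i
    have hsum : A.trace = ∑ j, hAh.eigenvalues j := trace_eq_sum_eig hAh
    have hsplit : ∑ j, hAh.eigenvalues j
        = hAh.eigenvalues i + ∑ j ∈ Finset.univ.erase i, hAh.eigenvalues j := by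
      rw [← Finset.add_sum_erase _ _ (Finset.mem_univ i)]
    have hbound : ∑ j ∈ Finset.univ.erase i, hAh.eigenvalues j
        ≤ ((r : ℝ) - 1) * (1 + specNorm F) := by
      have hcard : (Finset.univ.erase i).card = r - 1 := by
        rw [Finset.card_erase_of_mem (Finset.mem_univ i)]; simp
      calc ∑ j ∈ Finset.univ.erase i, hAh.eigenvalues j
          ≤ ∑ j ∈ Finset.univ.erase i, (1 + specNorm F) :=
            Finset.sum_le_sum (fun j _ => heigup j)
        _ = ((r - 1 : ℕ) : ℝ) * (1 + specNorm F) := by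
            rw [Finset.sum_const, hcard]; simp [nsmul_eq_mul]; ring
        _ = ((r : ℝ) - 1) * (1 + specNorm F) := by
            congr 1
            rw [Nat.cast_sub hr]; simp
    have h1 : (r : ℝ) * (δ ^ 2 - specNorm E) - ((r : ℝ) - 1) * (1 + specNorm F)
        ≤ hAh.eigenvalues i := by
      rw [hsum, hsplit] at htr
      linarith
    have h2 : (r : ℝ) * b0 ≤ (r : ℝ) * (δ ^ 2 - specNorm E) - ((r:ℝ) - 1) * (1 + specNorm F) := by
      rw [hb0, hεH]
      have : (r : ℝ) * (1 / (r : ℝ)) = 1 := mul_one_div_cancel (ne_of_gt hr0)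
      nlinarith [hF0]
    linarith
  have hmpos : 0 < (r : ℝ) * b0 := mul_pos hr0 hb0pos
  -- invertibility
  have hdet : IsUnit A.det := by
    rw [hAh.det_eq_prod_eigenvalues]
    have : (0:ℝ) < ∏ i, hAh.eigenvalues i :=
      Finset.prod_pos (fun i _ => lt_of_lt_of_le hmpos (heiglo i))
    simp only [RCLike.ofReal_real_eq_id, id_eq]
    exact isUnit_iff_ne_zero.mpr (ne_of_gt (by simpa using this))
  have hunit : IsUnit A := (Matrix.isUnit_iff_isUnit_det A).mpr hdet
  refine ⟨hunit, ?_⟩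
  -- norm bound on the inverse
  have hAAinv : A * A⁻¹ = 1 := Matrix.mul_nonsing_inv A hdet
  have hbnd : specNorm A⁻¹ ≤ 1 / ((r : ℝ) * b0) := by
    apply ContinuousLinearMap.opNorm_le_bound _ (by positivity)
    intro z
    set z0 : Fin r → ℝ := (WithLp.equiv 2 (Fin r → ℝ)) z with hz0
    have hz : ev z0 = z := rfl
    set u : Fin r → ℝ := A⁻¹ *ᵥ z0 with hu
    have hLz : (LinearMap.toContinuousLinearMap (Matrix.toEuclideanLin A⁻¹)) z = ev u := by
      simp [ev, hu, Matrix.toEuclideanLin_apply, hz0]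
    rw [hLz]
    have hAu : A *ᵥ u = z0 := by
      rw [hu, mulVec_mulVec, hAAinv, one_mulVec]
    have h1 : (r : ℝ) * b0 * (u ⬝ᵥ u) ≤ u ⬝ᵥ z0 := by
      have := quad_lower hAh ((r : ℝ) * b0) heiglo u
      rwa [hAu] at this
    have h2 : u ⬝ᵥ z0 ≤ ‖ev u‖ * ‖z‖ := by
      rw [← inner_ev u z0, hz]
      exact real_inner_le_norm _ _
    have h3 : u ⬝ᵥ u = ‖ev u‖ ^ 2 := (norm_ev_sq u).symm
    rcases eq_or_lt_of_le (norm_nonneg (ev u)) with h | h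
    · rw [← h]; positivity
    · rw [h3] at h1
      have h4 : (r : ℝ) * b0 * ‖ev u‖ ≤ ‖z‖ := by
        have h6 : (r : ℝ) * b0 * ‖ev u‖ * ‖ev u‖ ≤ ‖z‖ * ‖ev u‖ := by nlinarith
        exact le_of_mul_le_mul_right h6 h
      rw [div_mul_eq_mul_div, one_mul, le_div_iff₀ hmpos]
      nlinarith
  calc specNorm A⁻¹ ≤ 1 / ((r : ℝ) * b0) := hbnd
    _ = (1 / (r : ℝ)) * (1 / b0) := by rw [div_mul_div_comm, one_mul]
    _ = (1 / (r : ℝ)) * (1 / (δ ^ 2 - 1 + 1 / (r : ℝ) - εH)) := by rw [hb0]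
end

section
/- Let Π ∈ ℝ^{n×n} be a symmetric matrix satisfying Π² = Π + F for a symmetric matrix F, let C ⊆ {1,…,n} be an index set with |C| = r ≥ 1, and suppose Π(C,C) = R̃ᵀR̃ + E, where E is a symmetric r×r matrix and R̃ is an r×r upper triangular matrix whose diagonal entries all satisfy r̃_{ii} ≥ δ for some δ > 0. Set ε_H = ‖E‖₂ + ‖F‖₂ and suppose 1 − δ² + ε_H < 1/r. Then the n×r matrix Π(:,C) has full column rank and its 2-norm condition number, i.e., the ratio of its largest singular value to its smallest singular value, satisfies κ(Π(:,C)) ≤ (1/r) · (1 + ε_H)/(δ² − 1 + 1/r − ε_H). -/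
open Matrix

/-- The largest singular value of a real matrix `B`, i.e. `max_{‖x‖₂ = 1} ‖Bx‖₂`. -/
noncomputable def sigmaMax {m n : ℕ} (B : Matrix (Fin m) (Fin n) ℝ) : ℝ :=
  sSup {t | ∃ x : EuclideanSpace ℝ (Fin n), ‖x‖ = 1 ∧ t = ‖Matrix.toEuclideanLin B x‖}

/-- The smallest singular value of a real matrix `B`, i.e. `min_{‖x‖₂ = 1} ‖Bx‖₂`. -/
noncomputable def sigmaMin {m n : ℕ} (B : Matrix (Fin m) (Fin n) ℝ) : ℝ :=
  sInf {t | ∃ x : EuclideanSpace ℝ (Fin n), ‖x‖ = 1 ∧ t = ‖Matrix.toEuclideanLin B x‖}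

namespace StmtAux
variable {k l r n m : ℕ}

noncomputable def ev {k : ℕ} (v : Fin k → ℝ) : EuclideanSpace ℝ (Fin k) :=
  (WithLp.equiv 2 (Fin k → ℝ)).symm v

lemma ev_surj (x : EuclideanSpace ℝ (Fin k)) : ∃ v, x = ev v := ⟨WithLp.equiv 2 _ x, rfl⟩

lemma norm_ev_sq (v : Fin k → ℝ) : ‖ev v‖ ^ 2 = v ⬝ᵥ v := by
  rw [EuclideanSpace.norm_eq, Real.sq_sqrt (by positivity)]
  simp [ev, dotProduct, sq]

lemma inner_ev (u w : Fin k → ℝ) : (inner ℝ (ev u) (ev w) : ℝ) = u ⬝ᵥ w := by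
  simp [ev, dotProduct, mul_comm, PiLp.inner_apply]

lemma toEuclideanLin_ev (M : Matrix (Fin k) (Fin l) ℝ) (v : Fin l → ℝ) :
    Matrix.toEuclideanLin M (ev v) = ev (M *ᵥ v) := by
  simp [Matrix.toEuclideanLin_apply, ev]

lemma norm_toEuclideanLin_ev_sq (M : Matrix (Fin k) (Fin l) ℝ) (v : Fin l → ℝ) :
    ‖Matrix.toEuclideanLin M (ev v)‖ ^ 2 = (M *ᵥ v) ⬝ᵥ (M *ᵥ v) := by
  rw [toEuclideanLin_ev, norm_ev_sq]

lemma specNorm_nonneg (M : Matrix (Fin k) (Fin l) ℝ) : 0 ≤ specNorm M := norm_nonneg _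

lemma dot_self_nonneg (v : Fin k → ℝ) : 0 ≤ v ⬝ᵥ v := by
  have := norm_ev_sq v; nlinarith [norm_nonneg (ev v)]

lemma mulVec_dot_self_le (M : Matrix (Fin k) (Fin l) ℝ) (v : Fin l → ℝ) :
    (M *ᵥ v) ⬝ᵥ (M *ᵥ v) ≤ specNorm M ^ 2 * (v ⬝ᵥ v) := by
  have h := (LinearMap.toContinuousLinearMap (Matrix.toEuclideanLin M)).le_opNorm (ev v)
  have h2 : ‖Matrix.toEuclideanLin M (ev v)‖ ^ 2 ≤ (specNorm M * ‖ev v‖) ^ 2 := by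
    apply pow_le_pow_left₀ (norm_nonneg _) _ 2
    simpa [specNorm] using h
  rw [norm_toEuclideanLin_ev_sq] at h2
  calc (M *ᵥ v) ⬝ᵥ (M *ᵥ v) ≤ (specNorm M * ‖ev v‖) ^ 2 := h2
    _ = specNorm M ^ 2 * (v ⬝ᵥ v) := by rw [mul_pow, norm_ev_sq]

lemma dot_sq_le (u w : Fin k → ℝ) : (u ⬝ᵥ w) ^ 2 ≤ (u ⬝ᵥ u) * (w ⬝ᵥ w) := by
  have h := abs_real_inner_le_norm (ev u) (ev w)
  rw [inner_ev] at h
  have h2 : |u ⬝ᵥ w| ^ 2 ≤ (‖ev u‖ * ‖ev w‖) ^ 2 := pow_le_pow_left₀ (abs_nonneg _) h 2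
  rw [sq_abs, mul_pow, norm_ev_sq, norm_ev_sq] at h2
  exact h2

lemma abs_quadform_le (M : Matrix (Fin k) (Fin k) ℝ) (v : Fin k → ℝ) :
    |(M *ᵥ v) ⬝ᵥ v| ≤ specNorm M * (v ⬝ᵥ v) := by
  have h1 := dot_sq_le (M *ᵥ v) v
  have h2 := mulVec_dot_self_le M v
  have hv : 0 ≤ v ⬝ᵥ v := dot_self_nonneg v
  have hs := specNorm_nonneg M
  have hMv : 0 ≤ (M *ᵥ v) ⬝ᵥ (M *ᵥ v) := dot_self_nonneg _
  have h3 : ((M *ᵥ v) ⬝ᵥ v) ^ 2 ≤ (specNorm M * (v ⬝ᵥ v)) ^ 2 := by nlinarith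
  rw [← sq_abs ((M *ᵥ v) ⬝ᵥ v)] at h3
  exact (pow_le_pow_iff_left₀ (abs_nonneg _) (by positivity) two_ne_zero).mp h3

lemma trace_eq_sum_eig (A : Matrix (Fin k) (Fin k) ℝ) (hA : A.IsHermitian) :
    A.trace = ∑ i, hA.eigenvalues i := by
  simpa using hA.trace_eq_sum_eigenvalues

lemma eig_apply (A : Matrix (Fin k) (Fin k) ℝ) (hA : A.IsHermitian) (i : Fin k) :
    Matrix.toEuclideanLin A (hA.eigenvectorBasis i) = hA.eigenvalues i • hA.eigenvectorBasis i := by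
  apply (WithLp.equiv 2 (Fin k → ℝ)).injective
  simp [Matrix.toEuclideanLin_apply, hA.mulVec_eigenvectorBasis]

lemma quadform_eq_sum (A : Matrix (Fin k) (Fin k) ℝ) (hA : A.IsHermitian)
    (x : EuclideanSpace ℝ (Fin k)) :
    (inner ℝ (Matrix.toEuclideanLin A x) x : ℝ)
      = ∑ i, hA.eigenvalues i * (hA.eigenvectorBasis.repr x i) ^ 2 := by
  have hx : (Matrix.toEuclideanLin A) x
      = Matrix.toEuclideanLin A (∑ i, hA.eigenvectorBasis.repr x i • hA.eigenvectorBasis i) := by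
    rw [hA.eigenvectorBasis.sum_repr x]
  rw [hx, map_sum, sum_inner]
  refine Finset.sum_congr rfl fun i _ => ?_
  rw [_root_.map_smul, eig_apply A hA i, smul_smul, real_inner_smul_left,
    ← OrthonormalBasis.repr_apply_apply]
  ring

lemma norm_sq_eq_sum_repr (b : OrthonormalBasis (Fin k) ℝ (EuclideanSpace ℝ (Fin k)))
    (x : EuclideanSpace ℝ (Fin k)) : ‖x‖ ^ 2 = ∑ i, (b.repr x i) ^ 2 := by
  rw [← b.repr.norm_map x, EuclideanSpace.norm_eq, Real.sq_sqrt (by positivity)]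
  simp

lemma quadform_dot_eq_inner (A : Matrix (Fin k) (Fin k) ℝ) (v : Fin k → ℝ) :
    (A *ᵥ v) ⬝ᵥ v = (inner ℝ (Matrix.toEuclideanLin A (ev v)) (ev v) : ℝ) := by
  rw [toEuclideanLin_ev, inner_ev]

lemma eig_le (A : Matrix (Fin k) (Fin k) ℝ) (hA : A.IsHermitian) (L : ℝ)
    (hL : ∀ v : Fin k → ℝ, v ⬝ᵥ v = 1 → (A *ᵥ v) ⬝ᵥ v ≤ L) (i : Fin k) :
    hA.eigenvalues i ≤ L := by
  set w : Fin k → ℝ := WithLp.equiv 2 (Fin k → ℝ) (hA.eigenvectorBasis i) with hw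
  have hevw : ev w = hA.eigenvectorBasis i := rfl
  have hww : w ⬝ᵥ w = 1 := by
    rw [← norm_ev_sq, hevw, hA.eigenvectorBasis.orthonormal.1 i, one_pow]
  have hAw : A *ᵥ w = hA.eigenvalues i • w := hA.mulVec_eigenvectorBasis i
  have : (A *ᵥ w) ⬝ᵥ w = hA.eigenvalues i := by
    rw [hAw, smul_dotProduct, hww, smul_eq_mul, mul_one]
  linarith [hL w hww]

lemma rayleigh_lower (A : Matrix (Fin k) (Fin k) ℝ) (hA : A.IsHermitian) (L : ℝ)
    (hL : ∀ v : Fin k → ℝ, v ⬝ᵥ v = 1 → (A *ᵥ v) ⬝ᵥ v ≤ L)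
    (v : Fin k → ℝ) (hv : v ⬝ᵥ v = 1) :
    A.trace - ((k : ℝ) - 1) * L ≤ (A *ᵥ v) ⬝ᵥ v := by
  have heig : ∀ i, A.trace - ((k : ℝ) - 1) * L ≤ hA.eigenvalues i := by
    intro i
    have hsum : ∑ j ∈ Finset.univ.erase i, hA.eigenvalues j ≤ ((k : ℝ) - 1) * L := by
      have h1 := Finset.sum_le_card_nsmul (Finset.univ.erase i) hA.eigenvalues L
        (fun j _ => eig_le A hA L hL j)
      rw [Finset.card_erase_of_mem (Finset.mem_univ i), Finset.card_univ, Fintype.card_fin,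
        nsmul_eq_mul] at h1
      have hk : 1 ≤ k := Fin.pos i
      calc ∑ j ∈ Finset.univ.erase i, hA.eigenvalues j ≤ ((k - 1 : ℕ) : ℝ) * L := h1
        _ = ((k : ℝ) - 1) * L := by rw [Nat.cast_sub hk]; norm_num
    have htr : A.trace = hA.eigenvalues i + ∑ j ∈ Finset.univ.erase i, hA.eigenvalues j := by
      rw [trace_eq_sum_eig A hA, ← Finset.add_sum_erase _ _ (Finset.mem_univ i)]
    linarith
  rw [quadform_dot_eq_inner, quadform_eq_sum A hA]
  have hnorm : ∑ i, (hA.eigenvectorBasis.repr (ev v) i) ^ 2 = 1 := by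
    rw [← norm_sq_eq_sum_repr, norm_ev_sq, hv]
  calc A.trace - ((k : ℝ) - 1) * L
      = ∑ i, (A.trace - ((k : ℝ) - 1) * L) * (hA.eigenvectorBasis.repr (ev v) i) ^ 2 := by
        rw [← Finset.mul_sum, hnorm, mul_one]
    _ ≤ ∑ i, hA.eigenvalues i * (hA.eigenvectorBasis.repr (ev v) i) ^ 2 :=
        Finset.sum_le_sum fun i _ => mul_le_mul_of_nonneg_right (heig i) (sq_nonneg _)

def zc (c : Fin r → Fin n) (x : Fin r → ℝ) : Fin n → ℝ :=
  fun j => ∑ i, if c i = j then x i else 0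

lemma dot_zc (c : Fin r → Fin n) (x : Fin r → ℝ) (w : Fin n → ℝ) :
    w ⬝ᵥ zc c x = ∑ i, w (c i) * x i := by
  unfold zc dotProduct
  simp only [Finset.mul_sum, mul_ite, mul_zero]
  rw [Finset.sum_comm]
  refine Finset.sum_congr rfl fun i _ => ?_
  rw [Finset.sum_ite_eq Finset.univ (c i) (fun j => w j * x i)]
  simp

lemma zc_apply (c : Fin r → Fin n) (hc : Function.Injective c) (x : Fin r → ℝ) (i : Fin r) :
    zc c x (c i) = x i := by
  unfold zc
  rw [Finset.sum_eq_single i]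
  · simp
  · intro j _ hj
    split_ifs with hh
    · exact absurd (hc hh) hj
    · rfl
  · simp

lemma zc_dot_self (c : Fin r → Fin n) (hc : Function.Injective c) (x : Fin r → ℝ) :
    zc c x ⬝ᵥ zc c x = x ⬝ᵥ x := by
  rw [dot_zc]
  unfold dotProduct
  exact Finset.sum_congr rfl fun i _ => by rw [zc_apply c hc]

lemma mulVec_zc (M : Matrix (Fin m) (Fin n) ℝ) (c : Fin r → Fin n) (x : Fin r → ℝ) :
    M *ᵥ zc c x = (M.submatrix id c) *ᵥ x := by
  funext a
  show (fun j => M a j) ⬝ᵥ zc c x = _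
  rw [dot_zc]
  simp [Matrix.mulVec, dotProduct, Matrix.submatrix_apply]

lemma quad_submatrix (M : Matrix (Fin n) (Fin n) ℝ) (c : Fin r → Fin n) (x : Fin r → ℝ) :
    (M *ᵥ zc c x) ⬝ᵥ zc c x = ((M.submatrix c c) *ᵥ x) ⬝ᵥ x := by
  rw [dot_zc]
  unfold dotProduct
  refine Finset.sum_congr rfl fun i _ => ?_
  rw [mulVec_zc]
  simp [Matrix.mulVec, dotProduct, Matrix.submatrix_apply]

lemma dot_mulVec_right (M : Matrix (Fin m) (Fin n) ℝ) (v : Fin n → ℝ) (w : Fin m → ℝ) :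
    (M *ᵥ v) ⬝ᵥ w = v ⬝ᵥ (Mᵀ *ᵥ w) := by
  rw [dotProduct_comm, Matrix.dotProduct_mulVec, Matrix.mulVec_transpose,
    dotProduct_comm]

lemma mulVec_dot_mulVec_symm (M : Matrix (Fin n) (Fin n) ℝ) (hM : Mᵀ = M) (v : Fin n → ℝ) :
    (M *ᵥ v) ⬝ᵥ (M *ᵥ v) = ((M * M) *ᵥ v) ⬝ᵥ v := by
  rw [← Matrix.mulVec_mulVec, dot_mulVec_right, hM, dotProduct_comm]

lemma conjT_eq_transpose (M : Matrix (Fin n) (Fin n) ℝ) (hM : M.IsHermitian) : Mᵀ = M := by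
  have := hM.eq
  simpa [Matrix.conjTranspose, Matrix.map, Matrix.transpose] using this

lemma quadA_eq (Rt : Matrix (Fin r) (Fin r) ℝ) (v : Fin r → ℝ) :
    ((Rtᵀ * Rt) *ᵥ v) ⬝ᵥ v = (Rt *ᵥ v) ⬝ᵥ (Rt *ᵥ v) := by
  rw [← Matrix.mulVec_mulVec, dot_mulVec_right, Matrix.transpose_transpose,
    dotProduct_comm]

end StmtAux

open StmtAux in
set_option maxHeartbeats 2000000 in
theorem stmt1 {n r : ℕ} (hr : 1 ≤ r)
    (Pj F : Matrix (Fin n) (Fin n) ℝ) (hPj : Pj.IsHermitian) (hF : F.IsHermitian)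
    (hPF : Pj * Pj = Pj + F)
    (c : Fin r → Fin n) (hc : Function.Injective c)
    (E Rt : Matrix (Fin r) (Fin r) ℝ) (hE : E.IsHermitian)
    (hRt : Rt.BlockTriangular id)
    (δ : ℝ) (hδ : 0 < δ) (hdiag : ∀ i, δ ≤ Rt i i)
    (hfact : Pj.submatrix c c = Rtᵀ * Rt + E)
    (εH : ℝ) (hεH : εH = specNorm E + specNorm F)
    (hcond : 1 - δ ^ 2 + εH < 1 / (r : ℝ)) :
    (Pj.submatrix id c).rank = r ∧
      sigmaMax (Pj.submatrix id c) / sigmaMin (Pj.submatrix id c) ≤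
        (1 / (r : ℝ)) * ((1 + εH) / (δ ^ 2 - 1 + 1 / (r : ℝ) - εH)) := by
  classical
  have hrR : (0 : ℝ) < r := by exact_mod_cast hr
  set eE := specNorm E with heE
  set fF := specNorm F with hfF
  have he : 0 ≤ eE := specNorm_nonneg E
  have hf : 0 ≤ fF := specNorm_nonneg F
  have hε0 : 0 ≤ εH := by rw [hεH]; positivity
  set B := Pj.submatrix id c with hB
  set A := Rtᵀ * Rt with hA
  have hAH : A.IsHermitian := by
    have h1 : (Pj.submatrix c c).IsHermitian := hPj.submatrix c
    have h2 : A = Pj.submatrix c c - E := by rw [hfact]; exact (add_sub_cancel_right _ _).symm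
    rw [h2]; exact h1.sub hE
  have hPjT : Pjᵀ = Pj := conjT_eq_transpose Pj hPj
  set L : ℝ := 1 + εH with hL
  -- the quadratic form of A on unit vectors is at most L, and B-quadratic form identities
  have hkey : ∀ v : Fin r → ℝ, v ⬝ᵥ v = 1 →
      ((A *ᵥ v) ⬝ᵥ v ≤ L ∧
        (B *ᵥ v) ⬝ᵥ (B *ᵥ v) = (A *ᵥ v) ⬝ᵥ v + (E *ᵥ v) ⬝ᵥ v + (F *ᵥ zc c v) ⬝ᵥ zc c v ∧
        |(E *ᵥ v) ⬝ᵥ v| ≤ eE ∧ |(F *ᵥ zc c v) ⬝ᵥ zc c v| ≤ fF) := by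
    intro v hv
    set z := zc c v with hzdef
    have hz : z ⬝ᵥ z = 1 := by rw [hzdef, zc_dot_self c hc, hv]
    have hBv : B *ᵥ v = Pj *ᵥ z := by rw [hzdef, mulVec_zc Pj c v]
    have hT : (B *ᵥ v) ⬝ᵥ (B *ᵥ v) = (Pj *ᵥ z) ⬝ᵥ z + (F *ᵥ z) ⬝ᵥ z := by
      rw [hBv, mulVec_dot_mulVec_symm Pj hPjT, hPF, Matrix.add_mulVec, add_dotProduct]
    have hp : (Pj *ᵥ z) ⬝ᵥ z = (A *ᵥ v) ⬝ᵥ v + (E *ᵥ v) ⬝ᵥ v := by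
      rw [hzdef, quad_submatrix Pj c v, hfact, Matrix.add_mulVec, add_dotProduct]
    have hEb : |(E *ᵥ v) ⬝ᵥ v| ≤ eE := by
      have := abs_quadform_le E v; rwa [hv, mul_one] at this
    have hFb : |(F *ᵥ z) ⬝ᵥ z| ≤ fF := by
      have := abs_quadform_le F z; rwa [hz, mul_one] at this
    have hp2 : ((Pj *ᵥ z) ⬝ᵥ z) ^ 2 ≤ (Pj *ᵥ z) ⬝ᵥ (Pj *ᵥ z) := by
      have := dot_sq_le (Pj *ᵥ z) z; rwa [hz, mul_one] at this
    have hTP : (Pj *ᵥ z) ⬝ᵥ (Pj *ᵥ z) = (Pj *ᵥ z) ⬝ᵥ z + (F *ᵥ z) ⬝ᵥ z := by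
      rw [← hBv, hT, hBv]
    -- P ≤ 1 + fF
    have hPle : (Pj *ᵥ z) ⬝ᵥ z ≤ 1 + fF := by
      by_contra hcon
      push_neg at hcon
      have h1 := abs_le.mp hFb
      nlinarith [hp2, hTP]
    have hWle : (A *ᵥ v) ⬝ᵥ v ≤ L := by
      have h1 := abs_le.mp hEb
      rw [hL, hεH]
      have : (A *ᵥ v) ⬝ᵥ v = (Pj *ᵥ z) ⬝ᵥ z - (E *ᵥ v) ⬝ᵥ v := by rw [hp]; ring
      rw [this]
      linarith
    exact ⟨hWle, by rw [hT, hp], hEb, hFb⟩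
  have hquadA : ∀ v : Fin r → ℝ, v ⬝ᵥ v = 1 → (A *ᵥ v) ⬝ᵥ v ≤ L :=
    fun v hv => (hkey v hv).1
  -- trace lower bound
  have htr : (r : ℝ) * δ ^ 2 ≤ A.trace := by
    have hdia : ∀ i, δ ^ 2 ≤ A i i := by
      intro i
      have h1 : A i i = ∑ k, Rt k i * Rt k i := by
        simp [hA, Matrix.mul_apply, Matrix.transpose_apply]
      have h2 : Rt i i * Rt i i ≤ ∑ k, Rt k i * Rt k i :=
        Finset.single_le_sum (f := fun k => Rt k i * Rt k i)
          (fun k _ => mul_self_nonneg _) (Finset.mem_univ i)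
      have h3 : δ ^ 2 ≤ Rt i i * Rt i i := by nlinarith [hdiag i]
      linarith [h1 ▸ h2]
    have := Finset.card_nsmul_le_sum Finset.univ (fun i => A i i) (δ ^ 2) (fun i _ => hdia i)
    rw [Finset.card_univ, Fintype.card_fin, nsmul_eq_mul] at this
    simpa [Matrix.trace, Matrix.diag] using this
  -- D
  set D : ℝ := (r : ℝ) * δ ^ 2 - ((r : ℝ) - 1) * L - εH with hD
  have hDpos : 0 < D := by
    have h1 : (r : ℝ) * (1 - δ ^ 2 + εH) < (r : ℝ) * (1 / r) :=
      mul_lt_mul_of_pos_left hcond hrR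
    rw [mul_one_div_cancel (ne_of_gt hrR)] at h1
    rw [hD, hL]; nlinarith
  have hδ2L : δ ^ 2 ≤ L := by
    have h1 : A.trace ≤ (r : ℝ) * L := by
      rw [trace_eq_sum_eig A hAH]
      have := Finset.sum_le_card_nsmul Finset.univ hAH.eigenvalues L
        (fun i _ => eig_le A hAH L hquadA i)
      rwa [Finset.card_univ, Fintype.card_fin, nsmul_eq_mul] at this
    have h2 : (r : ℝ) * δ ^ 2 ≤ (r : ℝ) * L := le_trans htr h1
    exact le_of_mul_le_mul_left h2 hrR
  have hDle1 : D ≤ 1 := by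
    have h2 : (r : ℝ) * δ ^ 2 ≤ (r : ℝ) * L :=
      mul_le_mul_of_nonneg_left hδ2L (le_of_lt hrR)
    rw [hD]
    nlinarith [h2, hL]
  -- bounds on the singular-value set
  have hmaster : ∀ v : Fin r → ℝ, v ⬝ᵥ v = 1 →
      D ≤ (B *ᵥ v) ⬝ᵥ (B *ᵥ v) ∧ (B *ᵥ v) ⬝ᵥ (B *ᵥ v) ≤ 1 + 2 * εH := by
    intro v hv
    obtain ⟨hWle, hTeq, hEb, hFb⟩ := hkey v hv
    have hWge : A.trace - ((r : ℝ) - 1) * L ≤ (A *ᵥ v) ⬝ᵥ v :=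
      rayleigh_lower A hAH L hquadA v hv
    have h1 := abs_le.mp hEb
    have h2 := abs_le.mp hFb
    constructor
    · rw [hTeq, hD]
      have : εH = eE + fF := hεH
      nlinarith
    · rw [hTeq]
      have : εH = eE + fF := hεH
      nlinarith
  set S := {t | ∃ x : EuclideanSpace ℝ (Fin r), ‖x‖ = 1 ∧ t = ‖Matrix.toEuclideanLin B x‖}
    with hS
  have hSbound : ∀ t ∈ S, Real.sqrt D ≤ t ∧ t ≤ Real.sqrt (1 + 2 * εH) := by
    rintro t ⟨x, hx1, rfl⟩
    obtain ⟨v, hxv⟩ := ev_surj x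
    rw [hxv] at hx1 ⊢
    have hv : v ⬝ᵥ v = 1 := by rw [← norm_ev_sq, hx1, one_pow]
    obtain ⟨hlo, hhi⟩ := hmaster v hv
    have hsq : ‖Matrix.toEuclideanLin B (ev v)‖ ^ 2 = (B *ᵥ v) ⬝ᵥ (B *ᵥ v) :=
      norm_toEuclideanLin_ev_sq B v
    constructor
    · have := Real.sqrt_le_sqrt (hsq ▸ hlo)
      rwa [Real.sqrt_sq (norm_nonneg _)] at this
    · have := Real.sqrt_le_sqrt (hsq ▸ hhi)
      rwa [Real.sqrt_sq (norm_nonneg _)] at this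
  have hSne : S.Nonempty := by
    refine ⟨‖Matrix.toEuclideanLin B (EuclideanSpace.single ⟨0, hr⟩ (1 : ℝ))‖,
      EuclideanSpace.single ⟨0, hr⟩ (1 : ℝ), ?_, rfl⟩
    rw [EuclideanSpace.norm_single]; norm_num
  have hbddA : BddAbove S := ⟨Real.sqrt (1 + 2 * εH), fun t ht => (hSbound t ht).2⟩
  have hbddB : BddBelow S := ⟨Real.sqrt D, fun t ht => (hSbound t ht).1⟩
  have hmax_le : sigmaMax B ≤ Real.sqrt (1 + 2 * εH) :=
    csSup_le hSne (fun t ht => (hSbound t ht).2)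
  have hmin_ge : Real.sqrt D ≤ sigmaMin B :=
    le_csInf hSne (fun t ht => (hSbound t ht).1)
  have hsqrtD : 0 < Real.sqrt D := Real.sqrt_pos.mpr hDpos
  have hmin_pos : 0 < sigmaMin B := lt_of_lt_of_le hsqrtD hmin_ge
  -- rank
  have hrank : B.rank = r := by
    have hinj : Function.Injective B.mulVecLin := by
      rw [← LinearMap.ker_eq_bot]
      rw [LinearMap.ker_eq_bot']
      intro v hv0
      by_contra hvne
      have hvv : 0 < v ⬝ᵥ v := by
        rcases lt_or_eq_of_le (dot_self_nonneg v) with h | h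
        · exact h
        · exfalso
          apply hvne
          have : ev v = 0 := by
            have := norm_ev_sq v
            rw [← h] at this
            have hn : ‖ev v‖ = 0 := by nlinarith [norm_nonneg (ev v)]
            exact norm_eq_zero.mp hn
          have := congrArg (WithLp.equiv 2 (Fin r → ℝ)) this
          simpa [ev] using this
      set s : ℝ := Real.sqrt (v ⬝ᵥ v) with hs
      have hspos : 0 < s := Real.sqrt_pos.mpr hvv
      set u : Fin r → ℝ := s⁻¹ • v with hu
      have huu : u ⬝ᵥ u = 1 := by
        rw [hu, smul_dotProduct, dotProduct_smul, smul_eq_mul, smul_eq_mul,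
          ← mul_assoc]
        rw [hs]
        field_simp
        rw [Real.sq_sqrt (le_of_lt hvv)]
      have hBu : B *ᵥ u = 0 := by
        rw [hu, Matrix.mulVec_smul]
        have : B *ᵥ v = 0 := by rw [← Matrix.mulVecLin_apply, hv0]
        rw [this, smul_zero]
      have := (hmaster u huu).1
      rw [hBu] at this
      have hD0 : D ≤ 0 := by simpa using this
      linarith
    show Module.finrank ℝ ↥(LinearMap.range B.mulVecLin) = r
    rw [LinearMap.finrank_range_of_inj hinj]
    simp
  refine ⟨hrank, ?_⟩
  -- ratio bound
  have hstep1 : sigmaMax B / sigmaMin B ≤ Real.sqrt (1 + 2 * εH) / Real.sqrt D :=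
    div_le_div₀ (Real.sqrt_nonneg _) hmax_le hsqrtD hmin_ge
  have hstep2 : Real.sqrt (1 + 2 * εH) / Real.sqrt D ≤ (1 + εH) / D := by
    rw [← Real.sqrt_div (by linarith) D]
    have hq : (1 + 2 * εH) / D ≤ ((1 + εH) / D) ^ 2 := by
      rw [div_pow, div_le_div_iff₀ hDpos (by positivity)]
      have hA1 : (1 + 2 * εH) * D ≤ (1 + εH) ^ 2 := by nlinarith [hDle1, hε0, sq_nonneg εH]
      nlinarith [mul_le_mul_of_nonneg_right hA1 (le_of_lt hDpos)]
    have := Real.sqrt_le_sqrt hq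
    rwa [Real.sqrt_sq (by positivity)] at this
  have hRHS : (1 / (r : ℝ)) * ((1 + εH) / (δ ^ 2 - 1 + 1 / (r : ℝ) - εH)) = (1 + εH) / D := by
    have hrne : (r : ℝ) ≠ 0 := ne_of_gt hrR
    have hDne : D ≠ 0 := ne_of_gt hDpos
    have hden : δ ^ 2 - 1 + 1 / (r : ℝ) - εH = D / r := by
      rw [hD, hL]; field_simp; ring
    rw [hden]
    field_simp
  rw [hRHS]
  exact le_trans hstep1 hstep2
end

section
/- Let B ∈ ℝ^{n×n} be a symmetric positive semidefinite matrix of rank r that additionally satisfies B² = B, and suppose P is a permutation matrix and R an n×n upper triangular matrix with PᵀBP = RᵀR, where the diagonal entries R_{ii} are strictly positive for i = 1,…,r and rows r+1,…,n of R are zero. Write the first r rows of R as [R₁ R₂] with R₁ ∈ ℝ^{r×r} and R₂ ∈ ℝ^{r×(n−r)}. Then [R₁ R₂][R₁ R₂]ᵀ = R₁R₁ᵀ + R₂R₂ᵀ = I_r, i.e., the first r rows of R are orthonormal. -/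
open Matrix

theorem stmt3 {n r : ℕ} (B : Matrix (Fin n) (Fin n) ℝ)
    (hB : B.PosSemidef) (hrank : B.rank = r) (hidem : B * B = B)
    (σ : Equiv.Perm (Fin n)) (R : Matrix (Fin n) (Fin n) ℝ)
    (hR : R.BlockTriangular id)
    (hfact : (σ.permMatrix ℝ)ᵀ * B * σ.permMatrix ℝ = Rᵀ * R)
    (hpos : ∀ i : Fin n, (i : ℕ) < r → 0 < R i i)
    (hzero : ∀ i j : Fin n, r ≤ (i : ℕ) → R i j = 0) :
    ∀ i i' : Fin n, (i : ℕ) < r → (i' : ℕ) < r →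
      (R * Rᵀ) i i' = if i = i' then 1 else 0 := by
  have hrn : r ≤ n := by
    rw [← hrank]
    simpa using B.rank_le_card_width
  set P : Matrix (Fin n) (Fin n) ℝ := σ.permMatrix ℝ with hP
  have hPP : P * Pᵀ = 1 := by
    rw [hP, Equiv.Perm.permMatrix, ← PEquiv.toMatrix_symm, ← PEquiv.toMatrix_trans,
      ← Equiv.toPEquiv_symm, ← Equiv.toPEquiv_trans]
    simp [PEquiv.toMatrix_refl]
  have hC : (Rᵀ * R) * (Rᵀ * R) = Rᵀ * R := by
    rw [← hfact]
    calc Pᵀ * B * P * (Pᵀ * B * P) = Pᵀ * (B * ((P * Pᵀ) * B)) * P := by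
          simp only [Matrix.mul_assoc]
      _ = Pᵀ * B * P := by
          rw [hPP, Matrix.one_mul, ← Matrix.mul_assoc,
            Matrix.mul_assoc Pᵀ B B, hidem]
  set e : Fin r → Fin n := Fin.castLE hrn with he
  have hecoe : ∀ i : Fin r, (e i : ℕ) = (i : ℕ) := fun i => rfl
  set S : Matrix (Fin r) (Fin n) ℝ := R.submatrix e id with hS
  have hemb : Function.Injective e := Fin.castLE_injective hrn
  have hSS : Rᵀ * R = Sᵀ * S := by
    ext j k
    simp only [Matrix.mul_apply, Matrix.transpose_apply, hS, Matrix.submatrix_apply, id_eq]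
    have hmap : ∑ x ∈ Finset.univ.map ⟨e, hemb⟩, R x j * R x k
        = ∑ x : Fin r, R (e x) j * R (e x) k := by
      rw [Finset.sum_map]
      simp only [Function.Embedding.coeFn_mk]
    rw [← hmap]
    refine (Finset.sum_subset (Finset.subset_univ _) ?_).symm
    intro x _ hx
    have hxr : r ≤ (x : ℕ) := by
      by_contra h
      push_neg at h
      exact hx (Finset.mem_map.2 ⟨⟨(x : ℕ), h⟩, Finset.mem_univ _, Fin.ext rfl⟩)
    rw [hzero x j hxr, zero_mul]
  set N : Matrix (Fin r) (Fin r) ℝ := S * Sᵀ with hN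
  have hC' : Sᵀ * S * (Sᵀ * S) = Sᵀ * S := by rw [← hSS]; exact hC
  have hN32 : N * N * N = N * N := by
    have h5 : S * (Sᵀ * S * (Sᵀ * S)) * Sᵀ = S * (Sᵀ * S) * Sᵀ := by rw [hC']
    calc N * N * N = S * (Sᵀ * S * (Sᵀ * S)) * Sᵀ := by
          simp only [hN, Matrix.mul_assoc]
      _ = S * (Sᵀ * S) * Sᵀ := h5
      _ = N * N := by simp only [hN, Matrix.mul_assoc]
  set R₁ : Matrix (Fin r) (Fin r) ℝ := R.submatrix e e with hR₁
  have hR₁tri : R₁.BlockTriangular id := by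
    intro i j hij
    have hij' : (j : ℕ) < (i : ℕ) := hij
    have : (id (e j) : Fin n) < id (e i) := by
      simp only [id_eq, Fin.lt_def, hecoe]
      exact hij'
    exact hR this
  have hdetR₁ : R₁.det ≠ 0 := by
    rw [Matrix.det_of_upperTriangular hR₁tri]
    refine ne_of_gt (Finset.prod_pos fun i _ => ?_)
    exact hpos (e i) (by rw [hecoe]; exact i.isLt)
  have hdetN : N.det ≠ 0 := by
    rw [Ne, ← Matrix.exists_mulVec_eq_zero_iff]
    rintro ⟨v, hv, hNv⟩
    apply hv
    have h1 : (v ᵥ* S) ⬝ᵥ (v ᵥ* S) = 0 := by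
      have h0 : v ⬝ᵥ (N *ᵥ v) = 0 := by rw [hNv, dotProduct_zero]
      rw [hN, ← Matrix.mulVec_mulVec, Matrix.dotProduct_mulVec,
        Matrix.mulVec_transpose] at h0
      exact h0
    have h2 : v ᵥ* S = 0 := dotProduct_self_eq_zero.mp h1
    have h3 : v ᵥ* R₁ = 0 := by
      ext j
      have h4 := congrFun h2 (e j)
      simpa [Matrix.vecMul, dotProduct, hS, hR₁, Matrix.submatrix_apply] using h4
    have h6 := congrArg (fun w => w ᵥ* R₁⁻¹) h3
    simpa [Matrix.vecMul_vecMul, Matrix.mul_nonsing_inv _ (isUnit_iff_ne_zero.2 hdetR₁),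
      Matrix.vecMul_one, Matrix.zero_vecMul] using h6
  have hNunit : IsUnit N := (Matrix.isUnit_iff_isUnit_det _).2 (isUnit_iff_ne_zero.2 hdetN)
  have hcan : (N * N) * N = (N * N) * 1 := by rw [Matrix.mul_one]; exact hN32
  have hN1 : N = 1 := (hNunit.mul hNunit).mul_left_cancel hcan
  intro i i' hi hi'
  have hei : e ⟨(i : ℕ), hi⟩ = i := Fin.ext rfl
  have hei' : e ⟨(i' : ℕ), hi'⟩ = i' := Fin.ext rfl
  have hentry : (R * Rᵀ) i i' = N ⟨(i : ℕ), hi⟩ ⟨(i' : ℕ), hi'⟩ := by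
    rw [hN, hS]
    simp only [Matrix.mul_apply, Matrix.transpose_apply, Matrix.submatrix_apply, id_eq]
    rw [hei, hei']
  rw [hentry, hN1, Matrix.one_apply]
  by_cases h : i = i'
  · simp [h]
  · have hne : (⟨(i : ℕ), hi⟩ : Fin r) ≠ ⟨(i' : ℕ), hi'⟩ := by
      simp only [Ne, Fin.mk.injEq]
      exact fun hc => h (Fin.ext hc)
    simp [h, hne]
end

section
/- Let r ≥ 2 and let R̃ = D + T ∈ ℝ^{r×r}, where D is diagonal with diagonal entries d_{ii} ≥ δ > 0 and T is strictly upper triangular. Suppose ‖R̃ᵀR̃‖₂ ≤ 1 + ε for some ε ≥ 0 with 1 − δ² + ε ≥ 0. Then ‖TᵀD + DT + TᵀT‖₂ ≤ (r−1)(1 − δ² + ε). -/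
set_option maxHeartbeats 1000000

open Matrix

local notation "⟪" x ", " y "⟫" => @inner ℝ _ _ x y

lemma inner_toEuc {n : ℕ} (M : Matrix (Fin n) (Fin n) ℝ) (x y : EuclideanSpace ℝ (Fin n)) :
    ⟪(LinearMap.toContinuousLinearMap (Matrix.toEuclideanLin M)) x, y⟫ =
      ∑ i, ∑ j, M i j * x j * y i := by
  simp only [LinearMap.coe_toContinuousLinearMap', Matrix.toEuclideanLin_apply,
    PiLp.inner_apply, RCLike.inner_apply, conj_trivial,
    Matrix.mulVec, dotProduct, Finset.sum_mul]
  simp only [Finset.mul_sum]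
  refine Finset.sum_congr rfl fun i _ => Finset.sum_congr rfl fun j _ => ?_
  ring

lemma sym_norm_le {n : ℕ} (A : EuclideanSpace ℝ (Fin n) →L[ℝ] EuclideanSpace ℝ (Fin n))
    (hA : LinearMap.IsSymmetric (A : EuclideanSpace ℝ (Fin n) →ₗ[ℝ] EuclideanSpace ℝ (Fin n)))
    (C : ℝ) (hC : 0 ≤ C) (h : ∀ x, |⟪A x, x⟫| ≤ C * ‖x‖ ^ 2) : ‖A‖ ≤ C := by
  have hn : Module.finrank ℝ (EuclideanSpace ℝ (Fin n)) = n := finrank_euclideanSpace_fin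
  set b := hA.eigenvectorBasis hn with hb
  set μ := hA.eigenvalues hn with hμ
  have hμle : ∀ i, |μ i| ≤ C := by
    intro i
    have h1 : (A : EuclideanSpace ℝ (Fin n) →ₗ[ℝ] _) (b i) = (μ i : ℝ) • b i :=
      hA.apply_eigenvectorBasis hn i
    have h2 : ⟪A (b i), b i⟫ = μ i := by
      rw [show A (b i) = (A : EuclideanSpace ℝ (Fin n) →ₗ[ℝ] _) (b i) from rfl, h1,
        real_inner_smul_left, real_inner_self_eq_norm_sq, b.orthonormal.1 i]
      simp
    have := h (b i)
    rw [h2, b.orthonormal.1 i] at this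
    simpa using this
  refine A.opNorm_le_bound hC fun x => ?_
  have hAx : ∀ i, b.repr (A x) i = μ i * b.repr x i := fun i =>
    hA.eigenvectorBasis_apply_self_apply hn x i
  have h1 : ‖A x‖ ^ 2 ≤ C ^ 2 * ‖x‖ ^ 2 := by
    rw [← b.repr.norm_map (A x), ← b.repr.norm_map x]
    rw [EuclideanSpace.norm_eq, EuclideanSpace.norm_eq, Real.sq_sqrt (by positivity),
      Real.sq_sqrt (by positivity), Finset.mul_sum]
    refine Finset.sum_le_sum fun i _ => ?_
    rw [hAx i]
    have := hμle i
    have h2 : |μ i * b.repr x i| ≤ C * |b.repr x i| :=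
      (abs_mul _ _).le.trans (mul_le_mul_of_nonneg_right this (abs_nonneg _))
    calc ‖μ i * b.repr x i‖ ^ 2 = |μ i * b.repr x i| ^ 2 := by rw [Real.norm_eq_abs]
      _ ≤ (C * |b.repr x i|) ^ 2 := pow_le_pow_left₀ (abs_nonneg _) h2 2
      _ = C ^ 2 * ‖b.repr x i‖ ^ 2 := by rw [Real.norm_eq_abs]; ring
  nlinarith [norm_nonneg (A x), norm_nonneg x, mul_nonneg hC (norm_nonneg x)]

lemma isSym_of_transpose {n : ℕ} (M : Matrix (Fin n) (Fin n) ℝ) (hM : Mᵀ = M) :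
    LinearMap.IsSymmetric
      ((LinearMap.toContinuousLinearMap (Matrix.toEuclideanLin M) :
        EuclideanSpace ℝ (Fin n) →L[ℝ] EuclideanSpace ℝ (Fin n)) :
        EuclideanSpace ℝ (Fin n) →ₗ[ℝ] EuclideanSpace ℝ (Fin n)) := by
  intro x y
  show ⟪(LinearMap.toContinuousLinearMap (Matrix.toEuclideanLin M)) x, y⟫ =
    ⟪x, (LinearMap.toContinuousLinearMap (Matrix.toEuclideanLin M)) y⟫
  conv_rhs => rw [real_inner_comm]
  rw [inner_toEuc M x y, inner_toEuc M y x, Finset.sum_comm]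
  refine Finset.sum_congr rfl fun a _ => Finset.sum_congr rfl fun b _ => ?_
  have hba : M b a = M a b := (Matrix.transpose_apply M a b).symm.trans
    (congrFun (congrFun hM a) b)
  rw [hba]; ring

lemma norm_sq_eq_sum {n : ℕ} (x : EuclideanSpace ℝ (Fin n)) :
    ‖x‖ ^ 2 = ∑ i, x i * x i := by
  rw [← real_inner_self_eq_norm_sq]
  simp only [PiLp.inner_apply, RCLike.inner_apply, conj_trivial]

theorem stmt7 {r : ℕ} (hr : 2 ≤ r)
    (d : Fin r → ℝ) (T : Matrix (Fin r) (Fin r) ℝ)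
    (δ : ℝ) (hδ : 0 < δ) (hd : ∀ i, δ ≤ d i)
    (hT : ∀ i j : Fin r, j ≤ i → T i j = 0)
    (ε : ℝ) (hε : 0 ≤ ε) (hδε : 0 ≤ 1 - δ ^ 2 + ε)
    (hnorm : specNorm ((Matrix.diagonal d + T)ᵀ * (Matrix.diagonal d + T)) ≤ 1 + ε) :
    specNorm (Tᵀ * Matrix.diagonal d + Matrix.diagonal d * T + Tᵀ * T) ≤
      ((r : ℝ) - 1) * (1 - δ ^ 2 + ε) := by
  set η : ℝ := 1 - δ ^ 2 + ε with hη
  set B : Matrix (Fin r) (Fin r) ℝ := (Matrix.diagonal d + T)ᵀ * (Matrix.diagonal d + T) with hBdef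
  set M : Matrix (Fin r) (Fin r) ℝ := Tᵀ * Matrix.diagonal d + Matrix.diagonal d * T + Tᵀ * T
    with hMdef
  have hTdiag : ∀ i, T i i = 0 := fun i => hT i i le_rfl
  -- matrix identity
  have hB : B = Matrix.diagonal (fun i => d i ^ 2) + M := by
    have h2 : (fun i => d i ^ 2) = fun i => d i * d i := by funext i; ring
    rw [hBdef, hMdef, transpose_add, diagonal_transpose, add_mul, mul_add, mul_add,
      diagonal_mul_diagonal, h2]
    abel
  -- symmetry
  have hBsym : Bᵀ = B := by
    rw [hBdef, transpose_mul, transpose_transpose]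
  have hMsym : Mᵀ = M := by
    rw [hMdef]
    simp only [transpose_add, transpose_mul, diagonal_transpose, transpose_transpose]
    abel
  -- diagonal entries of B
  have hBii : ∀ i, δ ^ 2 ≤ B i i := by
    intro i
    have h1 : B i i = ∑ k, ((Matrix.diagonal d + T) k i) * ((Matrix.diagonal d + T) k i) := by
      rw [hBdef, Matrix.mul_apply]
      exact Finset.sum_congr rfl fun k _ => by rw [Matrix.transpose_apply]
    have h2 : (Matrix.diagonal d + T) i i = d i := by
      simp [Matrix.add_apply, Matrix.diagonal_apply_eq, hTdiag i]
    have h3 : ((Matrix.diagonal d + T) i i) * ((Matrix.diagonal d + T) i i) ≤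
        ∑ k, ((Matrix.diagonal d + T) k i) * ((Matrix.diagonal d + T) k i) :=
      Finset.single_le_sum (f := fun k => ((Matrix.diagonal d + T) k i) *
        ((Matrix.diagonal d + T) k i)) (fun k _ => mul_self_nonneg _) (Finset.mem_univ i)
    have h4 : δ ^ 2 ≤ d i * d i := by nlinarith [hd i]
    rw [h1]; rw [h2] at h3; linarith
  -- diagonal entries of M are nonnegative
  have hMii : ∀ i, 0 ≤ M i i := by
    intro i
    have h1 : M i i = ∑ k, T k i * T k i := by
      simp [hMdef, Matrix.add_apply, Matrix.mul_apply, Matrix.diagonal_apply, hTdiag i,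
        Finset.sum_ite_eq, Finset.sum_ite_eq']
    rw [h1]
    exact Finset.sum_nonneg fun k _ => mul_self_nonneg _
  -- quadratic form bound for B
  have hspecB : ‖LinearMap.toContinuousLinearMap (Matrix.toEuclideanLin B)‖ ≤ 1 + ε := hnorm
  have qB_le : ∀ x : EuclideanSpace ℝ (Fin r),
      ⟪(LinearMap.toContinuousLinearMap (Matrix.toEuclideanLin B)) x, x⟫ ≤ (1 + ε) * ‖x‖ ^ 2 := by
    intro x
    calc ⟪(LinearMap.toContinuousLinearMap (Matrix.toEuclideanLin B)) x, x⟫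
        ≤ ‖(LinearMap.toContinuousLinearMap (Matrix.toEuclideanLin B)) x‖ * ‖x‖ :=
          real_inner_le_norm _ _
      _ ≤ (‖LinearMap.toContinuousLinearMap (Matrix.toEuclideanLin B)‖ * ‖x‖) * ‖x‖ :=
          mul_le_mul_of_nonneg_right (ContinuousLinearMap.le_opNorm _ _) (norm_nonneg _)
      _ ≤ ((1 + ε) * ‖x‖) * ‖x‖ := by
          nlinarith [hspecB, norm_nonneg x,
            mul_nonneg (norm_nonneg x) (norm_nonneg x)]
      _ = (1 + ε) * ‖x‖ ^ 2 := by ring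
  -- off-diagonal entries of B
  have hBij : ∀ i j : Fin r, i ≠ j → |B i j| ≤ η := by
    intro i j hij
    have key : ∀ s : ℝ, s * s = 1 →
        (B i i + B i j * s) + (B j i + B j j * s) * s ≤ (1 + ε) * 2 := by
      intro s hs
      set v : Fin r → ℝ := fun k => (if k = i then (1 : ℝ) else 0) + (if k = j then s else 0)
        with hv
      set x : EuclideanSpace ℝ (Fin r) := (WithLp.equiv 2 (Fin r → ℝ)).symm v with hx
      have hxk : ∀ k, x k = v k := fun k => rfl
      have hvi : v i = 1 := by
        rw [hv]; simp [if_neg hij]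
      have hvj : v j = s := by
        rw [hv]; simp [if_neg (Ne.symm hij)]
      have hrow : ∀ f : Fin r → ℝ, ∑ b, f b * v b = f i + f j * s := by
        intro f
        rw [hv]
        simp only [mul_add, mul_ite, mul_zero, mul_one, Finset.sum_add_distrib,
          Finset.sum_ite_eq', Finset.mem_univ, if_true]
      have hq : ⟪(LinearMap.toContinuousLinearMap (Matrix.toEuclideanLin B)) x, x⟫ =
          ∑ a, ∑ b, B a b * v b * v a := by
        rw [inner_toEuc]
        exact Finset.sum_congr rfl fun a _ => Finset.sum_congr rfl fun b _ => by
          rw [hxk, hxk]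
      have hqval : ∑ a, ∑ b, B a b * v b * v a
          = (B i i + B i j * s) + (B j i + B j j * s) * s := by
        have h1 : ∀ a, ∑ b, B a b * v b * v a = (B a i + B a j * s) * v a := by
          intro a
          rw [show (∑ b, B a b * v b * v a) = (∑ b, B a b * v b) * v a from
            (Finset.sum_mul _ _ _).symm, hrow (fun b => B a b)]
        rw [Finset.sum_congr rfl fun a _ => h1 a, hrow (fun a => B a i + B a j * s)]
      have hnx : ‖x‖ ^ 2 = 1 + s * s := by
        rw [norm_sq_eq_sum]
        have : ∀ a, x a * x a = ((if a = i then (1:ℝ) else 0) * v a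
            + (if a = j then s else 0) * v a) := by
          intro a
          rw [hxk, hv]; ring
        rw [Finset.sum_congr rfl fun a _ => this a, Finset.sum_add_distrib]
        simp only [ite_mul, zero_mul, one_mul, Finset.sum_ite_eq', Finset.mem_univ, if_true]
        rw [hvi, hvj]
      have h := qB_le x
      rw [hq, hqval, hnx, hs] at h
      linarith
    have h1 := key 1 (by norm_num)
    have h2 := key (-1) (by norm_num)
    have hji : B j i = B i j := by rw [show B j i = Bᵀ i j from rfl, hBsym]
    rw [hji] at h1 h2
    have hbi := hBii i
    have hbj := hBii j
    rw [abs_le]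
    constructor
    · nlinarith
    · nlinarith
  -- off-diagonal entries of M equal those of B
  have hMij : ∀ i j : Fin r, i ≠ j → |M i j| ≤ η := by
    intro i j hij
    have h : M i j = B i j := by
      rw [hB, Matrix.add_apply, Matrix.diagonal_apply_ne _ hij, zero_add]
    rw [h]
    exact hBij i j hij
  -- quadratic form of M
  have qM : ∀ x : EuclideanSpace ℝ (Fin r),
      |⟪(LinearMap.toContinuousLinearMap (Matrix.toEuclideanLin M)) x, x⟫| ≤
        (((r : ℝ) - 1) * η) * ‖x‖ ^ 2 := by
    intro x
    have hnx : ‖x‖ ^ 2 = ∑ a, x a * x a := norm_sq_eq_sum x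
    have hqM : ⟪(LinearMap.toContinuousLinearMap (Matrix.toEuclideanLin M)) x, x⟫ =
        ∑ a, ∑ b, M a b * x b * x a := inner_toEuc M x x
    -- upper bound
    have hup : ⟪(LinearMap.toContinuousLinearMap (Matrix.toEuclideanLin M)) x, x⟫ ≤
        η * ‖x‖ ^ 2 := by
      have hqB : ⟪(LinearMap.toContinuousLinearMap (Matrix.toEuclideanLin B)) x, x⟫ =
          ∑ a, ∑ b, B a b * x b * x a := inner_toEuc B x x
      have hrowa : ∀ a : Fin r, ∑ b, B a b * x b * x a =
          d a ^ 2 * (x a * x a) + ∑ b, M a b * x b * x a := by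
        intro a
        have hdiag : ∑ b, (Matrix.diagonal (fun i => d i ^ 2)) a b * x b * x a
            = d a ^ 2 * (x a * x a) := by
          simp [Matrix.diagonal_apply, ite_mul, Finset.sum_ite_eq, mul_assoc]
        calc ∑ b, B a b * x b * x a
            = ∑ b, ((Matrix.diagonal (fun i => d i ^ 2)) a b * x b * x a
                + M a b * x b * x a) := by
              refine Finset.sum_congr rfl fun b _ => ?_
              rw [hB, Matrix.add_apply]; ring
          _ = d a ^ 2 * (x a * x a) + ∑ b, M a b * x b * x a := by
              rw [Finset.sum_add_distrib, hdiag]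
      have hsplit : (∑ a, ∑ b, B a b * x b * x a) =
          (∑ a, d a ^ 2 * (x a * x a)) + ∑ a, ∑ b, M a b * x b * x a := by
        rw [Finset.sum_congr rfl fun a _ => hrowa a, Finset.sum_add_distrib]
      have hdd : δ ^ 2 * ‖x‖ ^ 2 ≤ ∑ a, d a ^ 2 * (x a * x a) := by
        rw [hnx, Finset.mul_sum]
        refine Finset.sum_le_sum fun a _ => ?_
        have h4 : δ ^ 2 ≤ d a ^ 2 := by nlinarith [hd a]
        nlinarith [mul_self_nonneg (x a)]
      have h := qB_le x
      rw [hqB, hsplit] at h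
      rw [hqM, hη]
      nlinarith
    -- lower bound
    have hlow : -((((r : ℝ) - 1) * η) * ‖x‖ ^ 2) ≤
        ⟪(LinearMap.toContinuousLinearMap (Matrix.toEuclideanLin M)) x, x⟫ := by
      have hterm : ∀ a b : Fin r,
          -(η * |x b| * |x a|) + (if b = a then η * (|x a| * |x a|) else 0) ≤
            M a b * x b * x a := by
        intro a b
        by_cases hba : b = a
        · subst hba
          rw [if_pos rfl]
          have h0 : 0 ≤ M b b * (x b * x b) := mul_nonneg (hMii b) (mul_self_nonneg _)
          linarith [abs_mul_abs_self (x b), h0, mul_assoc (M b b) (x b) (x b)]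
        · rw [if_neg hba]
          have h1 : |M a b| ≤ η := hMij a b (fun h => hba (h ▸ rfl))
          have h2 : -(|M a b * x b * x a|) ≤ M a b * x b * x a := neg_abs_le _
          have h3 : |M a b * x b * x a| = |M a b| * |x b| * |x a| := by
            rw [abs_mul, abs_mul]
          have h4 : |M a b| * |x b| * |x a| ≤ η * |x b| * |x a| :=
            mul_le_mul_of_nonneg_right
              (mul_le_mul_of_nonneg_right h1 (abs_nonneg _)) (abs_nonneg _)
          rw [h3] at h2
          linarith
      have hsum : ∑ a, ∑ b, (-(η * |x b| * |x a|) +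
            (if b = a then η * (|x a| * |x a|) else 0)) ≤
          ∑ a, ∑ b, M a b * x b * x a :=
        Finset.sum_le_sum fun a _ => Finset.sum_le_sum fun b _ => hterm a b
      have hrowb : ∀ a : Fin r, ∑ b : Fin r, (-(η * |x b| * |x a|) +
            (if b = a then η * (|x a| * |x a|) else 0)) =
          -(η * (∑ b, |x b|) * |x a|) + η * (|x a| * |x a|) := by
        intro a
        rw [Finset.sum_add_distrib]
        congr 1
        · rw [Finset.sum_neg_distrib, Finset.mul_sum, Finset.sum_mul]
        · simp [Finset.sum_ite_eq', Finset.mem_univ]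
      have hval : (∑ a, ∑ b : Fin r, (-(η * |x b| * |x a|) +
            (if b = a then η * (|x a| * |x a|) else 0))) =
          -(η * ((∑ a, |x a|) ^ 2)) + η * ∑ a, |x a| * |x a| := by
        rw [Finset.sum_congr rfl fun a _ => hrowb a, Finset.sum_add_distrib]
        congr 1
        · rw [Finset.sum_neg_distrib]
          have h5 : ∑ a, η * (∑ b, |x b|) * |x a| = (η * (∑ b, |x b|)) * ∑ a, |x a| :=
            (Finset.mul_sum Finset.univ (fun a => |x a|) (η * (∑ b, |x b|))).symm
          rw [h5]
          ring
        · rw [← Finset.mul_sum]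
      have hcs : (∑ a, |x a|) ^ 2 ≤ (r : ℝ) * ∑ a, |x a| * |x a| := by
        have h := sq_sum_le_card_mul_sum_sq (s := (Finset.univ : Finset (Fin r)))
          (f := fun a => |x a|)
        simp only [Finset.card_univ, Fintype.card_fin] at h
        calc (∑ a, |x a|) ^ 2 ≤ (r : ℝ) * ∑ a, |x a| ^ 2 := by exact_mod_cast h
          _ = (r : ℝ) * ∑ a, |x a| * |x a| := by
              congr 1
              exact Finset.sum_congr rfl fun a _ => by rw [pow_two]
      have habs : ∑ a, |x a| * |x a| = ‖x‖ ^ 2 := by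
        rw [hnx]
        exact Finset.sum_congr rfl fun a _ => abs_mul_abs_self (x a)
      rw [hqM]
      calc -((((r : ℝ) - 1) * η) * ‖x‖ ^ 2)
          ≤ -(η * ((∑ a, |x a|) ^ 2)) + η * ∑ a, |x a| * |x a| := by
            rw [habs] at hcs ⊢
            nlinarith
        _ = ∑ a, ∑ b : Fin r, (-(η * |x b| * |x a|) +
              (if b = a then η * (|x a| * |x a|) else 0)) := hval.symm
        _ ≤ ∑ a, ∑ b, M a b * x b * x a := hsum
    rw [abs_le]
    have hrr : (1 : ℝ) ≤ (r : ℝ) - 1 := by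
      have h2r : (2 : ℝ) ≤ (r : ℝ) := by exact_mod_cast hr
      linarith
    refine ⟨hlow, hup.trans ?_⟩
    nlinarith [sq_nonneg ‖x‖]
  have hC : 0 ≤ ((r : ℝ) - 1) * η := by
    have h2r : (2 : ℝ) ≤ (r : ℝ) := by exact_mod_cast hr
    nlinarith
  exact sym_norm_le _ (isSym_of_transpose M hMsym) _ hC qM
end

section
/- Let Π ∈ ℝ^{n×n} be a symmetric matrix satisfying Π² = Π + F for a symmetric matrix F, let C ⊆ {1,…,n} be an index set with |C| = r ≥ 2, and suppose Π(C,C) = R̃ᵀR̃ + E, where E is a symmetric r×r matrix and R̃ is an r×r upper triangular matrix whose diagonal entries all satisfy r̃_{ii} ≥ δ for some δ > 0 with δ ≤ 1. Set ε_H = ‖E‖₂ + ‖F‖₂ and let D be the diagonal matrix with entries D_{ii} = r̃_{ii}. Then ‖Π(C,C) − D²‖₂ ≤ (r−1)(1−δ²) + r·ε_H. -/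
open Matrix

lemma dot_self_nonneg {k : ℕ} (x : Fin k → ℝ) : 0 ≤ x ⬝ᵥ x :=
  Finset.sum_nonneg fun i _ => mul_self_nonneg _

lemma euclid_norm {k : ℕ} (x : Fin k → ℝ) :
    ‖(WithLp.equiv 2 (Fin k → ℝ)).symm x‖ = Real.sqrt (x ⬝ᵥ x) := by
  rw [EuclideanSpace.norm_eq]
  congr 1
  simp [dotProduct, Real.norm_eq_abs, sq_abs, pow_two]

lemma euclid_inner {k : ℕ} (x y : Fin k → ℝ) :
    (inner ℝ ((WithLp.equiv 2 (Fin k → ℝ)).symm x) ((WithLp.equiv 2 (Fin k → ℝ)).symm y) : ℝ)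
      = x ⬝ᵥ y := by
  simp [PiLp.inner_apply, dotProduct, RCLike.inner_apply, mul_comm]

lemma dot_mulVec_le {m k : ℕ} (M : Matrix (Fin m) (Fin k) ℝ) (x : Fin k → ℝ) (y : Fin m → ℝ) :
    y ⬝ᵥ (M *ᵥ x) ≤ specNorm M * (Real.sqrt (y ⬝ᵥ y) * Real.sqrt (x ⬝ᵥ x)) := by
  have h1 : y ⬝ᵥ (M *ᵥ x)
      = (inner ℝ ((WithLp.equiv 2 (Fin m → ℝ)).symm y)
          ((LinearMap.toContinuousLinearMap (Matrix.toEuclideanLin M))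
            ((WithLp.equiv 2 (Fin k → ℝ)).symm x)) : ℝ) := by
    rw [LinearMap.coe_toContinuousLinearMap',
      (show Matrix.toEuclideanLin M ((WithLp.equiv 2 (Fin k → ℝ)).symm x)
        = (WithLp.equiv 2 (Fin m → ℝ)).symm (M *ᵥ x) from rfl),
      euclid_inner]
  rw [h1]
  calc (inner ℝ _ _ : ℝ) ≤ ‖(WithLp.equiv 2 (Fin m → ℝ)).symm y‖ *
        ‖(LinearMap.toContinuousLinearMap (Matrix.toEuclideanLin M))
          ((WithLp.equiv 2 (Fin k → ℝ)).symm x)‖ := real_inner_le_norm _ _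
    _ ≤ ‖(WithLp.equiv 2 (Fin m → ℝ)).symm y‖ *
        (specNorm M * ‖(WithLp.equiv 2 (Fin k → ℝ)).symm x‖) := by
        exact mul_le_mul_of_nonneg_left (ContinuousLinearMap.le_opNorm _ _) (norm_nonneg _)
    _ = _ := by rw [euclid_norm, euclid_norm]; ring

lemma dot_sym {k : ℕ} {S : Matrix (Fin k) (Fin k) ℝ} (hS : Sᵀ = S) (x y : Fin k → ℝ) :
    x ⬝ᵥ (S *ᵥ y) = y ⬝ᵥ (S *ᵥ x) := by
  rw [Matrix.dotProduct_mulVec, ← Matrix.mulVec_transpose, hS, dotProduct_comm]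

lemma bilin_le {k : ℕ} {S : Matrix (Fin k) (Fin k) ℝ} (hS : Sᵀ = S) {c : ℝ} (hc : 0 ≤ c)
    (h : ∀ x : Fin k → ℝ, |x ⬝ᵥ (S *ᵥ x)| ≤ c * (x ⬝ᵥ x)) (x y : Fin k → ℝ) :
    y ⬝ᵥ (S *ᵥ x) ≤ c * (Real.sqrt (x ⬝ᵥ x) * Real.sqrt (y ⬝ᵥ y)) := by
  have key : ∀ p q : Fin k → ℝ, q ⬝ᵥ (S *ᵥ p) ≤ c * (p ⬝ᵥ p + q ⬝ᵥ q) / 2 := by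
    intro p q
    have e1 : (p + q) ⬝ᵥ (S *ᵥ (p + q)) = p ⬝ᵥ (S *ᵥ p) + q ⬝ᵥ (S *ᵥ q)
        + 2 * (q ⬝ᵥ (S *ᵥ p)) := by
      rw [Matrix.mulVec_add, dotProduct_add, add_dotProduct,
        add_dotProduct, dot_sym hS p q]
      ring
    have e2 : (p - q) ⬝ᵥ (S *ᵥ (p - q)) = p ⬝ᵥ (S *ᵥ p) + q ⬝ᵥ (S *ᵥ q)
        - 2 * (q ⬝ᵥ (S *ᵥ p)) := by
      rw [Matrix.mulVec_sub, dotProduct_sub, sub_dotProduct,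
        sub_dotProduct, dot_sym hS p q]
      ring
    have h1 := (abs_le.mp (h (p + q))).2
    have h2 := (abs_le.mp (h (p - q))).1
    have e3 : (p + q) ⬝ᵥ (p + q) + (p - q) ⬝ᵥ (p - q) = 2 * (p ⬝ᵥ p + q ⬝ᵥ q) := by
      rw [dotProduct_add, add_dotProduct, add_dotProduct,
        dotProduct_sub, sub_dotProduct, sub_dotProduct,
        dotProduct_comm q p]
      ring
    nlinarith [h1, h2]
  rcases eq_or_ne (x ⬝ᵥ x) 0 with hx | hx
  · have : x = 0 := dotProduct_self_eq_zero.mp hx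
    subst this
    simp only [Matrix.mulVec_zero, dotProduct_zero]
    positivity
  rcases eq_or_ne (y ⬝ᵥ y) 0 with hy | hy
  · have : y = 0 := dotProduct_self_eq_zero.mp hy
    subst this
    simp only [zero_dotProduct]
    positivity
  have hxp : 0 < x ⬝ᵥ x := lt_of_le_of_ne (dot_self_nonneg x) (Ne.symm hx)
  have hyp : 0 < y ⬝ᵥ y := lt_of_le_of_ne (dot_self_nonneg y) (Ne.symm hy)
  set a := Real.sqrt (x ⬝ᵥ x) with ha
  set b := Real.sqrt (y ⬝ᵥ y) with hb
  have hap : 0 < a := Real.sqrt_pos.mpr hxp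
  have hbp : 0 < b := Real.sqrt_pos.mpr hyp
  have ha2 : a ^ 2 = x ⬝ᵥ x := Real.sq_sqrt (dot_self_nonneg x)
  have hb2 : b ^ 2 = y ⬝ᵥ y := Real.sq_sqrt (dot_self_nonneg y)
  have hkey := key ((1/a) • x) ((1/b) • y)
  have hps : ((1/a) • x) ⬝ᵥ ((1/a) • x) = 1 := by
    rw [smul_dotProduct, dotProduct_smul]
    simp only [smul_eq_mul]
    field_simp
    nlinarith [ha2]
  have hqs : ((1/b) • y) ⬝ᵥ ((1/b) • y) = 1 := by
    rw [smul_dotProduct, dotProduct_smul]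
    simp only [smul_eq_mul]
    field_simp
    nlinarith [hb2]
  have hbl : ((1/b) • y) ⬝ᵥ (S *ᵥ ((1/a) • x)) = (1/(a*b)) * (y ⬝ᵥ (S *ᵥ x)) := by
    rw [Matrix.mulVec_smul, smul_dotProduct, dotProduct_smul]
    simp [smul_eq_mul]
    ring
  rw [hps, hqs, hbl] at hkey
  have : y ⬝ᵥ (S *ᵥ x) ≤ c * (a * b) := by
    have habp : 0 < a * b := mul_pos hap hbp
    calc y ⬝ᵥ (S *ᵥ x) = (a*b) * ((1/(a*b)) * (y ⬝ᵥ (S *ᵥ x))) := by field_simp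
      _ ≤ (a*b) * (c * (1 + 1) / 2) := mul_le_mul_of_nonneg_left hkey habp.le
      _ = c * (a * b) := by ring
  linarith [this]

lemma specNorm_le_of_quadratic {k : ℕ} {S : Matrix (Fin k) (Fin k) ℝ} (hS : Sᵀ = S) {c : ℝ}
    (hc : 0 ≤ c) (h : ∀ x : Fin k → ℝ, |x ⬝ᵥ (S *ᵥ x)| ≤ c * (x ⬝ᵥ x)) : specNorm S ≤ c := by
  rw [specNorm]
  refine ContinuousLinearMap.opNorm_le_bound _ hc ?_
  intro X
  set x : Fin k → ℝ := WithLp.equiv 2 (Fin k → ℝ) X with hx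
  have hXx : X = (WithLp.equiv 2 (Fin k → ℝ)).symm x := rfl
  have happ : (LinearMap.toContinuousLinearMap (Matrix.toEuclideanLin S)) X
      = (WithLp.equiv 2 (Fin k → ℝ)).symm (S *ᵥ x) := by
    rw [hXx, LinearMap.coe_toContinuousLinearMap',
      (show Matrix.toEuclideanLin S ((WithLp.equiv 2 (Fin k → ℝ)).symm x)
        = (WithLp.equiv 2 (Fin k → ℝ)).symm (S *ᵥ x) from rfl)]
  rw [happ, hXx, euclid_norm, euclid_norm]
  set u := S *ᵥ x with hu
  have hb := bilin_le hS hc h x u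
  rw [← hu] at hb
  have hud : u ⬝ᵥ u ≤ c * (Real.sqrt (x ⬝ᵥ x) * Real.sqrt (u ⬝ᵥ u)) := hb
  have h2 : Real.sqrt (u ⬝ᵥ u) * Real.sqrt (u ⬝ᵥ u) = u ⬝ᵥ u :=
    Real.mul_self_sqrt (dot_self_nonneg u)
  rcases eq_or_lt_of_le (Real.sqrt_nonneg (u ⬝ᵥ u)) with hz | hz
  · rw [← hz]; positivity
  · nlinarith [hud, h2]

lemma diag_quad {k : ℕ} (d : Fin k → ℝ) (y : Fin k → ℝ) :
    y ⬝ᵥ ((Matrix.diagonal d) *ᵥ y) = ∑ i, d i * y i ^ 2 := by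
  simp only [dotProduct, Matrix.mulVec_diagonal]
  exact Finset.sum_congr rfl fun i _ => by ring

lemma trace_trick {k : ℕ} (T : Matrix (Fin k) (Fin k) ℝ) (hT : T.IsHermitian)
    (htr0 : T.trace = 0) {c : ℝ} (hc : 0 ≤ c)
    (hlow : ∀ x : Fin k → ℝ, -(c * (x ⬝ᵥ x)) ≤ x ⬝ᵥ (T *ᵥ x)) :
    ∀ x : Fin k → ℝ, x ⬝ᵥ (T *ᵥ x) ≤ ((k : ℝ) - 1) * c * (x ⬝ᵥ x) := by
  set V : Matrix (Fin k) (Fin k) ℝ := (hT.eigenvectorUnitary : Matrix (Fin k) (Fin k) ℝ) with hV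
  set d : Fin k → ℝ := hT.eigenvalues with hd
  have hst : star V * V = 1 := Unitary.coe_star_mul_self _
  have hst2 : V * star V = 1 := Unitary.coe_mul_star_self _
  have hsp : T = V * Matrix.diagonal d * star V := by
    have := hT.spectral_theorem
    rwa [RCLike.ofReal_real_eq_id, Function.id_comp] at this
  have hstar : star V = Vᵀ := by
    ext i j; simp [Matrix.conjTranspose_apply]
  -- quadratic identity
  have hquad : ∀ x : Fin k → ℝ, x ⬝ᵥ (T *ᵥ x) = ∑ i, d i * (Vᵀ *ᵥ x) i ^ 2 := by
    intro x
    calc x ⬝ᵥ (T *ᵥ x) = x ⬝ᵥ ((V * Matrix.diagonal d * star V) *ᵥ x) := by rw [← hsp]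
      _ = (Vᵀ *ᵥ x) ⬝ᵥ ((Matrix.diagonal d) *ᵥ (Vᵀ *ᵥ x)) := by
          rw [hstar, ← Matrix.mulVec_mulVec, ← Matrix.mulVec_mulVec,
            Matrix.dotProduct_mulVec x V, ← Matrix.mulVec_transpose]
      _ = ∑ i, d i * (Vᵀ *ᵥ x) i ^ 2 := diag_quad _ _
  have hiso : ∀ x : Fin k → ℝ, (Vᵀ *ᵥ x) ⬝ᵥ (Vᵀ *ᵥ x) = x ⬝ᵥ x := by
    intro x
    rw [Matrix.dotProduct_mulVec, ← Matrix.mulVec_transpose, Matrix.transpose_transpose,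
      Matrix.mulVec_mulVec, ← hstar, hst2, Matrix.one_mulVec]
  -- eigenvalue lower bounds
  have hev_lo : ∀ i, -c ≤ d i := by
    intro i
    set x : Fin k → ℝ := V *ᵥ Pi.single i 1 with hx
    have hy : Vᵀ *ᵥ x = Pi.single i 1 := by
      rw [hx, Matrix.mulVec_mulVec, ← hstar, hst, Matrix.one_mulVec]
    have h1 : x ⬝ᵥ (T *ᵥ x) = d i := by
      rw [hquad, hy]
      rw [Fintype.sum_eq_single i]
      · simp
      · intro j hj; simp [Pi.single_apply, hj]
    have h2 : x ⬝ᵥ x = 1 := by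
      rw [← hiso, hy]
      simp [dotProduct, Pi.single_apply]
    have := hlow x
    rw [h1, h2] at this
    linarith
  -- sum of eigenvalues is zero
  have hsum : ∑ i, d i = 0 := by
    have : T.trace = ∑ i, d i := by
      rw [congrArg Matrix.trace hsp, Matrix.trace_mul_cycle, hst, Matrix.one_mul,
        Matrix.trace_diagonal]
    rw [← this, htr0]
  -- each eigenvalue at most (k-1)c
  have hev_hi : ∀ i, d i ≤ ((k : ℝ) - 1) * c := by
    intro i
    have hk1 : 1 ≤ k := Nat.one_le_iff_ne_zero.mpr (by rintro rfl; exact i.elim0)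
    have hcard : ((Finset.univ.erase i).card : ℝ) = (k : ℝ) - 1 := by
      rw [Finset.card_erase_of_mem (Finset.mem_univ i)]
      simp [Nat.cast_sub hk1]
    have hsplit : d i + ∑ j ∈ Finset.univ.erase i, d j = 0 := by
      rw [← Finset.add_sum_erase _ _ (Finset.mem_univ i)] at hsum
      exact hsum
    have hlb : ((Finset.univ.erase i).card : ℝ) * (-c) ≤ ∑ j ∈ Finset.univ.erase i, d j := by
      have := Finset.card_nsmul_le_sum (Finset.univ.erase i) d (-c) (fun j _ => hev_lo j)
      simpa [nsmul_eq_mul] using this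
    rw [hcard] at hlb
    nlinarith [hlb, hsplit]
  intro x
  have h1 : x ⬝ᵥ (T *ᵥ x) ≤ ∑ i, ((k : ℝ) - 1) * c * (Vᵀ *ᵥ x) i ^ 2 := by
    rw [hquad]
    exact Finset.sum_le_sum fun i _ =>
      mul_le_mul_of_nonneg_right (hev_hi i) (sq_nonneg _)
  have h2 : ∑ i, ((k : ℝ) - 1) * c * (Vᵀ *ᵥ x) i ^ 2 = ((k : ℝ) - 1) * c * (x ⬝ᵥ x) := by
    rw [← Finset.mul_sum, ← hiso x]
    congr 1
    simp [dotProduct, pow_two]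
  linarith [h1, h2.le, h2.ge]


section Ext
variable {n r : ℕ}

/-- extension of a vector by zeros outside the range of `c` -/
def extVec (c : Fin r → Fin n) (x : Fin r → ℝ) : Fin n → ℝ :=
  fun i => ∑ j, if c j = i then x j else 0

lemma extVec_apply (c : Fin r → Fin n) (hc : Function.Injective c) (x : Fin r → ℝ) (j : Fin r) :
    extVec c x (c j) = x j := by
  rw [extVec, Fintype.sum_eq_single j]
  · simp
  · intro k hk
    rw [if_neg (fun h => hk (hc h))]

lemma extVec_dot (c : Fin r → Fin n) (x : Fin r → ℝ) (v : Fin n → ℝ) :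
    (extVec c x) ⬝ᵥ v = ∑ j, x j * v (c j) := by
  rw [dotProduct]
  simp only [extVec, Finset.sum_mul, ite_mul, zero_mul]
  rw [Finset.sum_comm]
  refine Finset.sum_congr rfl fun j _ => ?_
  rw [Fintype.sum_eq_single (c j)]
  · simp
  · intro i hi
    rw [if_neg (fun h => hi h.symm)]

lemma extVec_dot_self (c : Fin r → Fin n) (hc : Function.Injective c) (x : Fin r → ℝ) :
    (extVec c x) ⬝ᵥ (extVec c x) = x ⬝ᵥ x := by
  rw [extVec_dot]
  exact Finset.sum_congr rfl fun j _ => by rw [extVec_apply c hc]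

lemma mulVec_extVec (c : Fin r → Fin n) (M : Matrix (Fin n) (Fin n) ℝ) (x : Fin r → ℝ)
    (i : Fin n) : (M *ᵥ extVec c x) i = ∑ j, M i (c j) * x j := by
  rw [mulVec, dotProduct]
  simp only [extVec, Finset.mul_sum, mul_ite, mul_zero]
  rw [Finset.sum_comm]
  refine Finset.sum_congr rfl fun j _ => ?_
  rw [Fintype.sum_eq_single (c j)]
  · simp
  · intro i hi
    rw [if_neg (fun h => hi h.symm)]

lemma mulVec_extVec_sub (c : Fin r → Fin n) (M : Matrix (Fin n) (Fin n) ℝ) (x : Fin r → ℝ)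
    (j : Fin r) : (M *ᵥ extVec c x) (c j) = ((M.submatrix c c) *ᵥ x) j := by
  rw [mulVec_extVec, mulVec, dotProduct]
  simp [Matrix.submatrix_apply]

lemma extVec_quad (c : Fin r → Fin n) (M : Matrix (Fin n) (Fin n) ℝ) (x : Fin r → ℝ) :
    (extVec c x) ⬝ᵥ (M *ᵥ extVec c x) = x ⬝ᵥ ((M.submatrix c c) *ᵥ x) := by
  rw [extVec_dot, dotProduct]
  exact Finset.sum_congr rfl fun j _ => by rw [mulVec_extVec_sub]

lemma sum_sq_sub_le (c : Fin r → Fin n) (hc : Function.Injective c) (g : Fin n → ℝ) :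
    ∑ j, g (c j) ^ 2 ≤ ∑ i, g i ^ 2 := by
  have him : ∑ i ∈ Finset.univ.image c, g i ^ 2 = ∑ j, g (c j) ^ 2 :=
    Finset.sum_image (fun a _ b _ h => hc h)
  rw [← him]
  exact Finset.sum_le_sum_of_subset_of_nonneg (Finset.subset_univ _)
    (fun i _ _ => sq_nonneg _)

end Ext

lemma abs_dot_mulVec_le {m k : ℕ} (M : Matrix (Fin m) (Fin k) ℝ) (x : Fin k → ℝ)
    (y : Fin m → ℝ) :
    |y ⬝ᵥ (M *ᵥ x)| ≤ specNorm M * (Real.sqrt (y ⬝ᵥ y) * Real.sqrt (x ⬝ᵥ x)) := by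
  refine abs_le.mpr ⟨?_, dot_mulVec_le M x y⟩
  have h := dot_mulVec_le M x (-y)
  simp only [neg_dotProduct, dotProduct_neg, neg_neg] at h
  linarith

lemma dot_self_eq_sum_sq {k : ℕ} (v : Fin k → ℝ) : v ⬝ᵥ v = ∑ i, v i ^ 2 := by
  simp [dotProduct, pow_two]

set_option maxHeartbeats 1000000 in
theorem stmt8 {n r : ℕ} (hr : 2 ≤ r)
    (Pj F : Matrix (Fin n) (Fin n) ℝ) (hPj : Pj.IsHermitian) (hF : F.IsHermitian)
    (hPF : Pj * Pj = Pj + F)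
    (c : Fin r → Fin n) (hc : Function.Injective c)
    (E Rt : Matrix (Fin r) (Fin r) ℝ) (hE : E.IsHermitian)
    (hRt : Rt.BlockTriangular id)
    (δ : ℝ) (hδ : 0 < δ) (hδ1 : δ ≤ 1) (hdiag : ∀ i, δ ≤ Rt i i)
    (hfact : Pj.submatrix c c = Rtᵀ * Rt + E)
    (εH : ℝ) (hεH : εH = specNorm E + specNorm F)
    (D : Matrix (Fin r) (Fin r) ℝ) (hD : D = Matrix.diagonal fun i => Rt i i) :
    specNorm (Pj.submatrix c c - D * D) ≤
      ((r : ℝ) - 1) * (1 - δ ^ 2) + (r : ℝ) * εH := by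
  have hrR : (2 : ℝ) ≤ (r : ℝ) := by exact_mod_cast hr
  set B := Pj.submatrix c c with hB
  set f := specNorm F with hf
  set e := specNorm E with he
  have hf0 : 0 ≤ f := norm_nonneg _
  have he0 : 0 ≤ e := norm_nonneg _
  have hδ2 : δ ^ 2 ≤ 1 := by nlinarith
  have hPjT : Pjᵀ = Pj := by
    ext i j
    simpa [Matrix.conjTranspose_apply] using congrFun (congrFun hPj i) j
  have hBsym : Bᵀ = B := by
    ext i j
    simpa [hB, Matrix.conjTranspose_apply] using congrFun (congrFun (hPj.submatrix c) i) j
  -- the fundamental quadratic inequality coming from Pj * Pj = Pj + F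
  have hF1 : ∀ x : Fin r → ℝ,
      (B *ᵥ x) ⬝ᵥ (B *ᵥ x) ≤ x ⬝ᵥ (B *ᵥ x) + f * (x ⬝ᵥ x) := by
    intro x
    set xt := extVec c x with hxt
    have h1 : x ⬝ᵥ (B *ᵥ x) = xt ⬝ᵥ (Pj *ᵥ xt) := (extVec_quad c Pj x).symm
    have h2 : xt ⬝ᵥ ((Pj * Pj) *ᵥ xt) = (Pj *ᵥ xt) ⬝ᵥ (Pj *ᵥ xt) := by
      rw [← Matrix.mulVec_mulVec, Matrix.dotProduct_mulVec, ← Matrix.mulVec_transpose, hPjT]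
    have h3 : (B *ᵥ x) ⬝ᵥ (B *ᵥ x) ≤ (Pj *ᵥ xt) ⬝ᵥ (Pj *ᵥ xt) := by
      have hsum := sum_sq_sub_le c hc (fun i => (Pj *ᵥ xt) i)
      have heq : (B *ᵥ x) ⬝ᵥ (B *ᵥ x) = ∑ j, ((Pj *ᵥ xt) (c j)) ^ 2 := by
        rw [dot_self_eq_sum_sq]
        exact Finset.sum_congr rfl fun j _ => by rw [mulVec_extVec_sub c]
      rw [heq, dot_self_eq_sum_sq]
      exact hsum
    have h4 : xt ⬝ᵥ (F *ᵥ xt) ≤ f * (x ⬝ᵥ x) := by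
      have h := dot_mulVec_le F xt xt
      rw [Real.mul_self_sqrt (dot_self_nonneg xt), extVec_dot_self c hc] at h
      exact h
    have h5 : xt ⬝ᵥ ((Pj * Pj) *ᵥ xt) = xt ⬝ᵥ (Pj *ᵥ xt) + xt ⬝ᵥ (F *ᵥ xt) := by
      rw [hPF, Matrix.add_mulVec, dotProduct_add]
    linarith [h3, h4, h2.symm.le, h5.le, h1.le]
  -- Cauchy-Schwarz
  have hCS : ∀ x : Fin r → ℝ,
      (x ⬝ᵥ (B *ᵥ x)) ^ 2 ≤ (x ⬝ᵥ x) * ((B *ᵥ x) ⬝ᵥ (B *ᵥ x)) := by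
    intro x
    have := Finset.sum_mul_sq_le_sq_mul_sq Finset.univ x (B *ᵥ x)
    rw [← dot_self_eq_sum_sq, ← dot_self_eq_sum_sq] at this
    exact this
  -- Rayleigh quotient bounds for B
  have hQup : ∀ x : Fin r → ℝ, x ⬝ᵥ (B *ᵥ x) ≤ (1 + f) * (x ⬝ᵥ x) := by
    intro x
    have h1 := hF1 x
    have h2 := hCS x
    have ht := dot_self_nonneg x
    have hu := dot_self_nonneg (B *ᵥ x)
    have h3 : (x ⬝ᵥ (B *ᵥ x)) ^ 2 ≤ (x ⬝ᵥ x) * (x ⬝ᵥ (B *ᵥ x) + f * (x ⬝ᵥ x)) :=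
      le_trans h2 (mul_le_mul_of_nonneg_left h1 ht)
    by_contra hcon
    push_neg at hcon
    have hd : 0 < x ⬝ᵥ (B *ᵥ x) - (1 + f) * (x ⬝ᵥ x) := sub_pos.mpr hcon
    have hdt : 0 ≤ (x ⬝ᵥ (B *ᵥ x) - (1 + f) * (x ⬝ᵥ x)) * (x ⬝ᵥ x) := mul_nonneg hd.le ht
    have hdtf : 0 ≤ f * ((x ⬝ᵥ (B *ᵥ x) - (1 + f) * (x ⬝ᵥ x)) * (x ⬝ᵥ x)) :=
      mul_nonneg hf0 hdt
    have hdd : 0 < (x ⬝ᵥ (B *ᵥ x) - (1 + f) * (x ⬝ᵥ x)) *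
        (x ⬝ᵥ (B *ᵥ x) - (1 + f) * (x ⬝ᵥ x)) := mul_pos hd hd
    nlinarith [h3, hdt, hdtf, hdd, mul_self_nonneg (f * (x ⬝ᵥ x))]
  have hQlo : ∀ x : Fin r → ℝ, -(f * (x ⬝ᵥ x)) ≤ x ⬝ᵥ (B *ᵥ x) := by
    intro x
    have h1 := hF1 x
    have hu := dot_self_nonneg (B *ᵥ x)
    linarith
  -- diagonal entry facts
  have hBdiag : ∀ i, B i i = (∑ k, Rt k i ^ 2) + E i i := by
    intro i
    rw [hfact, Matrix.add_apply, Matrix.mul_apply]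
    congr 1
    exact Finset.sum_congr rfl fun k _ => by rw [Matrix.transpose_apply, pow_two]
  have hEdiag : ∀ i : Fin r, |E i i| ≤ e := by
    intro i
    have h := abs_dot_mulVec_le E (Pi.single i 1) (Pi.single i 1)
    have h1 : (Pi.single i 1 : Fin r → ℝ) ⬝ᵥ (E *ᵥ Pi.single i 1) = E i i := by
      simp [dotProduct, Matrix.mulVec, Pi.single_apply]
    have h2 : (Pi.single i 1 : Fin r → ℝ) ⬝ᵥ (Pi.single i 1 : Fin r → ℝ) = 1 := by
      simp [dotProduct, Pi.single_apply]
    rw [h1, h2, Real.sqrt_one, mul_one, mul_one] at h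
    exact h
  have hBii_single : ∀ i : Fin r, (Pi.single i 1 : Fin r → ℝ) ⬝ᵥ (B *ᵥ Pi.single i 1) = B i i := by
    intro i
    simp [dotProduct, Matrix.mulVec, Pi.single_apply]
  have hBii_up : ∀ i, B i i ≤ 1 + f := by
    intro i
    have h := hQup (Pi.single i 1)
    rw [hBii_single i] at h
    have h2 : (Pi.single i 1 : Fin r → ℝ) ⬝ᵥ (Pi.single i 1 : Fin r → ℝ) = 1 := by
      simp [dotProduct, Pi.single_apply]
    rw [h2, mul_one] at h
    exact h
  have hsum_sq : ∀ i, Rt i i ^ 2 ≤ ∑ k, Rt k i ^ 2 := by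
    intro i
    exact Finset.single_le_sum (f := fun k => Rt k i ^ 2) (fun k _ => sq_nonneg _)
      (Finset.mem_univ i)
  have hBii_lo : ∀ i, δ ^ 2 - e ≤ B i i := by
    intro i
    have h1 := hBdiag i
    have h2 := hsum_sq i
    have h3 := (abs_le.mp (hEdiag i)).1
    have h4 : δ ^ 2 ≤ Rt i i ^ 2 := by nlinarith [hdiag i, hδ.le]
    linarith
  have hDii : ∀ i, Rt i i ^ 2 ≤ B i i + e := by
    intro i
    have h1 := hBdiag i
    have h2 := hsum_sq i
    have h3 := (abs_le.mp (hEdiag i)).1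
    linarith
  -- the trace trick applied to T = diag(B) - B
  set T : Matrix (Fin r) (Fin r) ℝ := Matrix.diagonal (fun i => B i i) - B with hT
  have hTherm : T.IsHermitian := (Matrix.isHermitian_diagonal _).sub (hPj.submatrix c)
  have hTtr : T.trace = 0 := by
    rw [hT, Matrix.trace_sub, Matrix.trace_diagonal, Matrix.trace]
    simp [Matrix.diag]
  have hTquad : ∀ x : Fin r → ℝ,
      x ⬝ᵥ (T *ᵥ x) = (∑ i, B i i * x i ^ 2) - x ⬝ᵥ (B *ᵥ x) := by
    intro x
    rw [hT, Matrix.sub_mulVec, dotProduct_sub, diag_quad]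
  have hc' : (0 : ℝ) ≤ 1 - δ ^ 2 + εH := by rw [hεH]; linarith
  have hTlow : ∀ x : Fin r → ℝ, -((1 - δ ^ 2 + εH) * (x ⬝ᵥ x)) ≤ x ⬝ᵥ (T *ᵥ x) := by
    intro x
    rw [hTquad]
    have h1 : (δ ^ 2 - e) * (x ⬝ᵥ x) ≤ ∑ i, B i i * x i ^ 2 := by
      rw [dot_self_eq_sum_sq, Finset.mul_sum]
      exact Finset.sum_le_sum fun i _ => mul_le_mul_of_nonneg_right (hBii_lo i) (sq_nonneg _)
    have h2 := hQup x
    rw [hεH]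
    nlinarith [dot_self_nonneg x]
  have hThi := trace_trick T hTherm hTtr hc' hTlow
  -- final quadratic bounds for M = B - D * D
  have hDD : D * D = Matrix.diagonal (fun i => Rt i i * Rt i i) := by
    rw [hD, Matrix.diagonal_mul_diagonal]
  have hMsym : (B - D * D)ᵀ = B - D * D := by
    rw [Matrix.transpose_sub, hBsym, hDD, Matrix.diagonal_transpose]
  have hMquad : ∀ x : Fin r → ℝ,
      x ⬝ᵥ ((B - D * D) *ᵥ x) = x ⬝ᵥ (B *ᵥ x) - ∑ i, (Rt i i * Rt i i) * x i ^ 2 := by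
    intro x
    rw [Matrix.sub_mulVec, dotProduct_sub, hDD, diag_quad]
  set t : ℝ := ((r : ℝ) - 1) * (1 - δ ^ 2) + (r : ℝ) * εH with ht
  have ht0 : 0 ≤ t := by
    rw [ht, hεH]
    nlinarith
  refine specNorm_le_of_quadratic hMsym ht0 ?_
  intro x
  have hxx := dot_self_nonneg x
  rw [hMquad x]
  have hup : x ⬝ᵥ (B *ᵥ x) - ∑ i, (Rt i i * Rt i i) * x i ^ 2 ≤ t * (x ⬝ᵥ x) := by
    have h1 : δ ^ 2 * (x ⬝ᵥ x) ≤ ∑ i, (Rt i i * Rt i i) * x i ^ 2 := by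
      rw [dot_self_eq_sum_sq, Finset.mul_sum]
      refine Finset.sum_le_sum fun i _ => mul_le_mul_of_nonneg_right ?_ (sq_nonneg _)
      nlinarith [hdiag i, hδ.le]
    have h2 := hQup x
    have hA : 0 ≤ ((r:ℝ) - 2) * (1 - δ ^ 2) * (x ⬝ᵥ x) := by
      have : (0:ℝ) ≤ ((r:ℝ) - 2) * (1 - δ ^ 2) := mul_nonneg (by linarith) (by linarith)
      exact mul_nonneg this hxx
    have hBb : 0 ≤ (r:ℝ) * e * (x ⬝ᵥ x) :=
      mul_nonneg (mul_nonneg (by linarith) he0) hxx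
    have hCc : 0 ≤ ((r:ℝ) - 1) * f * (x ⬝ᵥ x) :=
      mul_nonneg (mul_nonneg (by linarith) hf0) hxx
    rw [ht, hεH]
    nlinarith [h1, h2, hA, hBb, hCc]
  have hlo : -(t * (x ⬝ᵥ x)) ≤ x ⬝ᵥ (B *ᵥ x) - ∑ i, (Rt i i * Rt i i) * x i ^ 2 := by
    have h1 : ∑ i, (Rt i i * Rt i i) * x i ^ 2 ≤ ∑ i, (B i i + e) * x i ^ 2 := by
      refine Finset.sum_le_sum fun i _ => mul_le_mul_of_nonneg_right ?_ (sq_nonneg _)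
      rw [← pow_two]
      exact hDii i
    have h2 : ∑ i, (B i i + e) * x i ^ 2 = (∑ i, B i i * x i ^ 2) + e * (x ⬝ᵥ x) := by
      rw [dot_self_eq_sum_sq, Finset.mul_sum, ← Finset.sum_add_distrib]
      exact Finset.sum_congr rfl fun i _ => by ring
    have h3 := hThi x
    rw [hTquad x] at h3
    rw [hεH] at h3
    have hD0 : 0 ≤ f * (x ⬝ᵥ x) := mul_nonneg hf0 hxx
    rw [ht, hεH]
    nlinarith [h1, h2, h3, hD0]
  exact abs_le.mpr ⟨hlo, hup⟩
end
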